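/- arXiv:2111.15527 — 3 statements merged into one kernel-verified Lean document; each statement's English description precedes it below -/
import Mathlib

section
/- (Embedding Principle of critical functions.) Given NN({m_l}_{l=0}^L) and any wider NN({m'_l}_{l=0}^L) (m'_0 = m_0, m'_L = m_L, m'_l ≥ m_l for all l ∈ [L-1]), for any data S, loss ℓ and activation σ (each differentiable), the set of critical functions of the narrow network is contained in that of the wide network: every function f : ℝ^d → ℝ^{d'} of the form f = f_{θ} for some critical point θ of the narrow network's empirical risk also satisfies f = f_{θ'} for some critical point θ' of the wider network's empirical risk. -/
namespace EmbeddingPrinciple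

/-- Parameters of a fully-connected NN: `(θ l).1 i j` is the weight `W^{[l+1]}_{ij}`
and `(θ l).2 i` is the bias `b^{[l+1]}_i` (the paper's layer `l` corresponds to index `l-1`).
Only the coordinates below the widths are meaningful for a concrete architecture. -/
abbrev NNParams : Type := ℕ → (ℕ → ℕ → ℝ) × (ℕ → ℝ)

/-- Feature vectors `f^{[l]}` (entrywise activation `σ`); `m` is the width function. -/
noncomputable def feat (σ : ℝ → ℝ) (m : ℕ → ℕ) (θ : NNParams) (x : ℕ → ℝ) : ℕ → ℕ → ℝ
  | 0 => x
  | l + 1 => fun i =>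
      σ ((∑ j ∈ Finset.range (m l), (θ l).1 i j * feat σ m θ x l j) + (θ l).2 i)

/-- Pre-activation of layer `l+1`: `W^{[l+1]} f^{[l]} + b^{[l+1]}`. -/
noncomputable def preact (σ : ℝ → ℝ) (m : ℕ → ℕ) (θ : NNParams) (x : ℕ → ℝ) (l i : ℕ) : ℝ :=
  (∑ j ∈ Finset.range (m l), (θ l).1 i j * feat σ m θ x l j) + (θ l).2 i

/-- Output `f_θ` of the `(K+1)`-layer network (the paper's `L` is `K+1`). -/
noncomputable def nnOut (σ : ℝ → ℝ) (m : ℕ → ℕ) (K : ℕ) (θ : NNParams) (x : ℕ → ℝ) :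
    ℕ → ℝ := fun i => preact σ m θ x K i

/-- Feature gradient `g^{[l+1]} = σ'(W^{[l+1]} f^{[l]} + b^{[l+1]})`. -/
noncomputable def gFeat (σ : ℝ → ℝ) (m : ℕ → ℕ) (θ : NNParams) (x : ℕ → ℝ) (l i : ℕ) : ℝ :=
  deriv σ (preact σ m θ x l i)

/-- Output truncated to the valid output coordinates. -/
noncomputable def truncOut (σ : ℝ → ℝ) (m : ℕ → ℕ) (K : ℕ) (θ : NNParams) (x : ℕ → ℝ) :
    ℕ → ℝ := fun i => if i < m (K + 1) then nnOut σ m K θ x i else 0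

/-- Empirical risk `R_S(θ) = (1/n) ∑ᵢ ℓ(f_θ(xᵢ), yᵢ)`. -/
noncomputable def risk (σ : ℝ → ℝ) (m : ℕ → ℕ) (K : ℕ)
    (loss : (ℕ → ℝ) → (ℕ → ℝ) → ℝ) {n : ℕ} (X Y : Fin n → ℕ → ℝ) (θ : NNParams) : ℝ :=
  (n : ℝ)⁻¹ * ∑ a : Fin n, loss (truncOut σ m K θ (X a)) (Y a)

/-- Update a single weight coordinate. -/
def updW (θ : NNParams) (l i j : ℕ) (t : ℝ) : NNParams := fun l' =>
  if l' = l then ((fun i' j' => if i' = i ∧ j' = j then t else (θ l).1 i' j'), (θ l).2)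
  else θ l'

/-- Update a single bias coordinate. -/
def updB (θ : NNParams) (l i : ℕ) (t : ℝ) : NNParams := fun l' =>
  if l' = l then ((θ l).1, fun i' => if i' = i then t else (θ l).2 i') else θ l'

/-- `θ` is a critical point of `R` : all partial derivatives with respect to the valid
coordinates of the `(K+1)`-layer architecture with width function `m` vanish. -/
def IsCritical (R : NNParams → ℝ) (m : ℕ → ℕ) (K : ℕ) (θ : NNParams) : Prop :=
  (∀ l, l ≤ K → ∀ i, i < m (l + 1) → ∀ j, j < m l →
      deriv (fun t => R (updW θ l i j t)) ((θ l).1 i j) = 0) ∧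
  (∀ l, l ≤ K → ∀ i, i < m (l + 1) →
      deriv (fun t => R (updB θ l i t)) ((θ l).2 i) = 0)

/-- Equality of two parameter tuples on all valid coordinates of the architecture. -/
def ParamEqOn (m : ℕ → ℕ) (K : ℕ) (θ₁ θ₂ : NNParams) : Prop :=
  ∀ l, l ≤ K → ∀ i, i < m (l + 1) →
    (∀ j, j < m l → (θ₁ l).1 i j = (θ₂ l).1 i j) ∧ (θ₁ l).2 i = (θ₂ l).2 i

/-- Error vectors by reversed index: `errRev … t = z^{[K+1-t]}`, where `z^{[K+1]} = ∇ℓ`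
(represented by the function `dloss`) and `z^{[l]} = (W^{[l+1]})ᵀ (z^{[l+1]} ∘ g^{[l+1]})`. -/
noncomputable def errRev (σ : ℝ → ℝ) (m : ℕ → ℕ) (K : ℕ) (θ : NNParams)
    (dloss : (ℕ → ℝ) → (ℕ → ℝ) → ℕ → ℝ) (x y : ℕ → ℝ) : ℕ → ℕ → ℝ
  | 0 => dloss (truncOut σ m K θ x) y
  | t + 1 => fun j =>
      ∑ i ∈ Finset.range (m (K + 1 - t)),
        (θ (K - t)).1 i j *
          (errRev σ m K θ dloss x y t i * (if t = 0 then 1 else gFeat σ m θ x (K - t) i))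

/-- `e^{[l]} = z^{[l]} ∘ g^{[l]}` (with `g^{[K+1]} = 1`). -/
noncomputable def errE (σ : ℝ → ℝ) (m : ℕ → ℕ) (K : ℕ) (θ : NNParams)
    (dloss : (ℕ → ℝ) → (ℕ → ℝ) → ℕ → ℝ) (x y : ℕ → ℝ) (l i : ℕ) : ℝ :=
  errRev σ m K θ dloss x y (K + 1 - l) i *
    (if l = K + 1 then 1 else gFeat σ m θ x (l - 1) i)

/-- Differentiability of the loss in its first argument (on each finite-dimensional
coordinate block). -/
def LossDiff (loss : (ℕ → ℝ) → (ℕ → ℝ) → ℝ) : Prop :=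
  ∀ (y : ℕ → ℝ) (d : ℕ),
    Differentiable ℝ (fun u : Fin d → ℝ => loss (fun i => if h : i < d then u ⟨i, h⟩ else 0) y)

/-- Widths after adding one neuron in the paper's layer `p+1`. -/
def widen (m : ℕ → ℕ) (p : ℕ) : ℕ → ℕ := fun l => if l = p + 1 then m (p + 1) + 1 else m l

/-- One-step null embedding `T^α_{l,0}` at the paper's layer `l = p+1`. -/
def nullEmb (m : ℕ → ℕ) (p : ℕ) (α : ℝ) (θ : NNParams) : NNParams := fun l =>
  if l = p then
    ((fun i j => if i = m (p + 1) then 0 else (θ p).1 i j),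
     (fun i => if i = m (p + 1) then α else (θ p).2 i))
  else if l = p + 1 then
    ((fun i j => if j = m (p + 1) then 0 else (θ (p + 1)).1 i j), (θ (p + 1)).2)
  else θ l

/-- One-step splitting embedding `T^α_{l,s}` at the paper's layer `l = p+1`,
splitting neuron `s`. -/
def splitEmb (m : ℕ → ℕ) (p s : ℕ) (α : ℝ) (θ : NNParams) : NNParams := fun l =>
  if l = p then
    ((fun i j => if i = m (p + 1) then (θ p).1 s j else (θ p).1 i j),
     (fun i => if i = m (p + 1) then (θ p).2 s else (θ p).2 i))
  else if l = p + 1 then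
    ((fun i j =>
        if j = s then (1 - α) * (θ (p + 1)).1 i s
        else if j = m (p + 1) then α * (θ (p + 1)).1 i s
        else (θ (p + 1)).1 i j),
     (θ (p + 1)).2)
  else θ l

/-- A one-step embedding step: layer index `p` (the paper's layer `p+1`),
`none` for a null embedding / `some s` for splitting neuron `s`, and the
free parameter `α`. -/
abbrev EmbStep : Type := ℕ × Option ℕ × ℝ

/-- The one-step embedding determined by a step. -/
def stepEmb (m : ℕ → ℕ) (st : EmbStep) (θ : NNParams) : NNParams :=
  match st.2.1 with
  | none => nullEmb m st.1 st.2.2 θ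
  | some s => splitEmb m st.1 s st.2.2 θ

/-- Width function after performing a sequence of one-step embeddings. -/
def multiWidth (m : ℕ → ℕ) : List EmbStep → (ℕ → ℕ)
  | [] => m
  | st :: rest => multiWidth (widen m st.1) rest

/-- The multi-step composition embedding of a sequence of one-step embeddings. -/
def multiEmb (m : ℕ → ℕ) : List EmbStep → NNParams → NNParams
  | [], θ => θ
  | st :: rest, θ => multiEmb (widen m st.1) rest (stepEmb m st θ)

/-- Validity of a sequence of steps: each step acts on a layer `p+1 ∈ [L-1]` and,
for a splitting step, splits an existing neuron of the current width. -/
def ValidSteps (K : ℕ) (m : ℕ → ℕ) : List EmbStep → Prop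
  | [] => True
  | st :: rest => st.1 < K ∧ (∀ s, st.2.1 = some s → s < m (st.1 + 1)) ∧
      ValidSteps K (widen m st.1) rest
/-! ### Auxiliary material for the proof -/

/-- Zero-padding of narrow parameters to an arbitrary wider architecture. -/
def pad (m : ℕ → ℕ) (θ : NNParams) : NNParams := fun l =>
  (fun i j => if i < m (l + 1) ∧ j < m l then (θ l).1 i j else 0,
   fun i => if i < m (l + 1) then (θ l).2 i else 0)

lemma feat_succ (σ : ℝ → ℝ) (m : ℕ → ℕ) (θ : NNParams) (x : ℕ → ℝ) (l i : ℕ) :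
    feat σ m θ x (l + 1) i
      = σ ((∑ j ∈ Finset.range (m l), (θ l).1 i j * feat σ m θ x l j) + (θ l).2 i) := rfl

lemma feat_succ_preact (σ : ℝ → ℝ) (m : ℕ → ℕ) (θ : NNParams) (x : ℕ → ℝ) (l i : ℕ) :
    feat σ m θ x (l + 1) i = σ (preact σ m θ x l i) := rfl

/-- A neuron whose incoming weights and bias vanish has constant feature `σ 0`. -/
lemma feat_extra (σ : ℝ → ℝ) (M : ℕ → ℕ) (Θ : NNParams) (x : ℕ → ℝ) (l j : ℕ)
    (hz : ∀ j', (Θ l).1 j j' = 0) (hb : (Θ l).2 j = 0) :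
    feat σ M Θ x (l + 1) j = σ 0 := by
  rw [feat_succ]
  have : (∑ j' ∈ Finset.range (M l), (Θ l).1 j j' * feat σ M Θ x l j') = 0 := by
    apply Finset.sum_eq_zero; intro j' _; rw [hz j', zero_mul]
  rw [this, hb, add_zero]

lemma updW_W_same (Θ : NNParams) (l i j : ℕ) (t : ℝ) (i' j' : ℕ) :
    ((updW Θ l i j t) l).1 i' j' = if i' = i ∧ j' = j then t else (Θ l).1 i' j' := by
  simp [updW]

lemma updW_B_same (Θ : NNParams) (l i j : ℕ) (t : ℝ) (i' : ℕ) :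
    ((updW Θ l i j t) l).2 i' = (Θ l).2 i' := by
  simp [updW]

lemma updW_ne (Θ : NNParams) (l i j : ℕ) (t : ℝ) (l' : ℕ) (h : l' ≠ l) :
    (updW Θ l i j t) l' = Θ l' := by
  simp [updW, h]

lemma updB_W (Θ : NNParams) (l i : ℕ) (t : ℝ) (l' i' j' : ℕ) :
    ((updB Θ l i t) l').1 i' j' = (Θ l').1 i' j' := by
  by_cases h : l' = l
  · subst h; simp [updB]
  · simp [updB, h]

lemma updB_B_same (Θ : NNParams) (l i : ℕ) (t : ℝ) (i' : ℕ) :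
    ((updB Θ l i t) l).2 i' = if i' = i then t else (Θ l).2 i' := by
  simp [updB]

lemma updB_ne (Θ : NNParams) (l i : ℕ) (t : ℝ) (l' : ℕ) (h : l' ≠ l) :
    (updB Θ l i t) l' = Θ l' := by
  simp [updB, h]

/-- Main comparison lemma: if the wide parameters agree with the narrow ones on all
valid weights, and at each valid neuron the extra incoming contributions are absorbed
into the narrow bias, then features and preactivations agree on valid coordinates. -/
lemma main_eq (σ : ℝ → ℝ) (m m' : ℕ → ℕ) (K : ℕ)
    (hw : ∀ l, l ≤ K → m l ≤ m' l)
    (Θ Θ' : NNParams)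
    (H1 : ∀ l, l ≤ K → ∀ i, i < m (l + 1) → ∀ j, j < m l → (Θ' l).1 i j = (Θ l).1 i j)
    (H2 : ∀ (x : ℕ → ℝ) (l), l ≤ K → ∀ i, i < m (l + 1) →
      (Θ' l).2 i + ∑ j ∈ Finset.Ico (m l) (m' l), (Θ' l).1 i j * feat σ m' Θ' x l j
        = (Θ l).2 i)
    (x : ℕ → ℝ) :
    ∀ l, l ≤ K →
      (∀ j, j < m l → feat σ m' Θ' x l j = feat σ m Θ x l j) ∧
      (∀ i, i < m (l + 1) → preact σ m' Θ' x l i = preact σ m Θ x l i) := by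
  have key : ∀ l, l ≤ K →
      (∀ j, j < m l → feat σ m' Θ' x l j = feat σ m Θ x l j) →
      ∀ i, i < m (l + 1) → preact σ m' Θ' x l i = preact σ m Θ x l i := by
    intro l hl hfeat i hi
    have hsplit : (∑ j ∈ Finset.range (m' l), (Θ' l).1 i j * feat σ m' Θ' x l j)
        = (∑ j ∈ Finset.range (m l), (Θ' l).1 i j * feat σ m' Θ' x l j)
          + ∑ j ∈ Finset.Ico (m l) (m' l), (Θ' l).1 i j * feat σ m' Θ' x l j := by
      rw [Finset.range_eq_Ico, Finset.range_eq_Ico]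
      exact (Finset.sum_Ico_consecutive (fun j => (Θ' l).1 i j * feat σ m' Θ' x l j) (Nat.zero_le (m l)) (hw l hl)).symm
    have hfirst : (∑ j ∈ Finset.range (m l), (Θ' l).1 i j * feat σ m' Θ' x l j)
        = ∑ j ∈ Finset.range (m l), (Θ l).1 i j * feat σ m Θ x l j := by
      apply Finset.sum_congr rfl
      intro j hj
      rw [H1 l hl i hi j (Finset.mem_range.mp hj), hfeat j (Finset.mem_range.mp hj)]
    calc preact σ m' Θ' x l i
        = (∑ j ∈ Finset.range (m l), (Θ l).1 i j * feat σ m Θ x l j)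
            + ((Θ' l).2 i
              + ∑ j ∈ Finset.Ico (m l) (m' l), (Θ' l).1 i j * feat σ m' Θ' x l j) := by
          unfold preact; rw [hsplit, hfirst]; ring
      _ = preact σ m Θ x l i := by rw [H2 x l hl i hi]; rfl
  intro l
  induction l with
  | zero =>
      intro hl
      refine ⟨fun j _ => rfl, key 0 hl (fun j _ => rfl)⟩
  | succ l ih =>
      intro hl
      have hl' : l ≤ K := Nat.le_of_succ_le hl
      have hfeat : ∀ j, j < m (l + 1) → feat σ m' Θ' x (l + 1) j = feat σ m Θ x (l + 1) j := by
        intro j hj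
        rw [feat_succ_preact, feat_succ_preact, (ih hl').2 j hj]
      exact ⟨hfeat, key (l + 1) hl hfeat⟩

/-- Under the same hypotheses, the risks agree. -/
lemma risk_eq (σ : ℝ → ℝ) (m m' : ℕ → ℕ) (K : ℕ)
    (hw : ∀ l, l ≤ K → m l ≤ m' l) (hLtop : m' (K + 1) = m (K + 1))
    (Θ Θ' : NNParams)
    (H1 : ∀ l, l ≤ K → ∀ i, i < m (l + 1) → ∀ j, j < m l → (Θ' l).1 i j = (Θ l).1 i j)
    (H2 : ∀ (x : ℕ → ℝ) (l), l ≤ K → ∀ i, i < m (l + 1) →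
      (Θ' l).2 i + ∑ j ∈ Finset.Ico (m l) (m' l), (Θ' l).1 i j * feat σ m' Θ' x l j
        = (Θ l).2 i)
    (loss : (ℕ → ℝ) → (ℕ → ℝ) → ℝ) {n : ℕ} (X Y : Fin n → ℕ → ℝ) :
    risk σ m' K loss X Y Θ' = risk σ m K loss X Y Θ := by
  unfold risk
  congr 1
  apply Finset.sum_congr rfl
  intro a _
  congr 1
  funext i
  unfold truncOut nnOut
  rw [hLtop]
  split
  · exact (main_eq σ m m' K hw Θ Θ' H1 H2 (X a) K le_rfl).2 i (by assumption)
  · rfl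

/-- Derivative of a function precomposed with an affine map, at a critical point. -/
lemma deriv_affine_zero (F : ℝ → ℝ) (c a : ℝ) (h : deriv F c = 0) :
    deriv (fun t : ℝ => F (c + a * t)) 0 = 0 := by
  rcases eq_or_ne a 0 with rfl | ha
  · simp
  · by_cases hd : DifferentiableAt ℝ F c
    · have h1 : HasDerivAt (fun t : ℝ => c + a * t) a 0 := by
        simpa using ((hasDerivAt_id (0 : ℝ)).const_mul a).const_add c
      have h2 : HasDerivAt F (deriv F c) (c + a * 0) := by
        simpa using hd.hasDerivAt
      have h3 := h2.comp 0 h1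
      have : HasDerivAt (fun t : ℝ => F (c + a * t)) (deriv F c * a) 0 := h3
      rw [this.deriv, h, zero_mul]
    · have hnd : ¬ DifferentiableAt ℝ (fun t : ℝ => F (c + a * t)) 0 := by
        intro hG
        apply hd
        have hφ : DifferentiableAt ℝ (fun u : ℝ => a⁻¹ * (u - c)) c :=
          (differentiableAt_id.sub_const c).const_mul a⁻¹
        have hG' : DifferentiableAt ℝ (fun t : ℝ => F (c + a * t))
            ((fun u : ℝ => a⁻¹ * (u - c)) c) := by simpa using hG
        have hcomp := DifferentiableAt.comp c hG' hφ
        have heq : ((fun t : ℝ => F (c + a * t)) ∘ (fun u : ℝ => a⁻¹ * (u - c))) = F := by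
          funext u
          simp only [Function.comp]
          field_simp
          congr 1; ring
        rwa [heq] at hcomp
      rw [deriv_zero_of_not_differentiableAt hnd]

/-- Embedding Principle of critical functions: every critical function
of the narrower network is a critical function of any wider network. -/
theorem embedding_principle_critical_functions
    (K : ℕ) (hK : 1 ≤ K) (m m' : ℕ → ℕ)
    (h0 : m' 0 = m 0) (hLtop : m' (K + 1) = m (K + 1))
    (hle : ∀ l, 1 ≤ l → l ≤ K → m l ≤ m' l)
    (σ : ℝ → ℝ) (hσ : Differentiable ℝ σ)
    (loss : (ℕ → ℝ) → (ℕ → ℝ) → ℝ) (hloss : LossDiff loss)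
    (n : ℕ) (X Y : Fin n → ℕ → ℝ)
    (θ : NNParams) (hcrit : IsCritical (risk σ m K loss X Y) m K θ) :
    ∃ θ' : NNParams,
      IsCritical (risk σ m' K loss X Y) m' K θ' ∧
      ∀ (x : ℕ → ℝ) (i : ℕ), i < m (K + 1) →
        nnOut σ m' K θ' x i = nnOut σ m K θ x i := by
  classical
  have hw : ∀ l, l ≤ K → m l ≤ m' l := by
    intro l hl
    rcases Nat.eq_zero_or_pos l with rfl | hpos
    · exact le_of_eq h0.symm
    · exact hle l hpos hl
  set θ' := pad m θ with hθ'
  -- basic facts about the padded parameters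
  have padW : ∀ l i j, i < m (l + 1) → j < m l → (θ' l).1 i j = (θ l).1 i j := by
    intro l i j hi hj; simp [hθ', pad, hi, hj]
  have padW0j : ∀ l i j, ¬ j < m l → (θ' l).1 i j = 0 := by
    intro l i j hj; simp [hθ', pad, hj]
  have padW0i : ∀ l i j, ¬ i < m (l + 1) → (θ' l).1 i j = 0 := by
    intro l i j hi; simp [hθ', pad, hi]
  have padB : ∀ l i, i < m (l + 1) → (θ' l).2 i = (θ l).2 i := by
    intro l i hi; simp [hθ', pad, hi]
  -- risk equality for pairs whose extra incoming weights vanish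
  have hre := fun (Θ Θ' : NNParams) H1 H2 =>
    risk_eq σ m m' K hw hLtop Θ Θ' H1 H2 loss X Y
  -- base comparison for `θ'` itself
  have padH1 : ∀ l, l ≤ K → ∀ i, i < m (l + 1) → ∀ j, j < m l →
      (θ' l).1 i j = (θ l).1 i j := fun l _ i hi j hj => padW l i j hi hj
  have padH2 : ∀ (x : ℕ → ℝ) (l), l ≤ K → ∀ i, i < m (l + 1) →
      (θ' l).2 i + ∑ j ∈ Finset.Ico (m l) (m' l), (θ' l).1 i j * feat σ m' θ' x l j
        = (θ l).2 i := by
    intro x l _ i hi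
    have hz : (∑ j ∈ Finset.Ico (m l) (m' l), (θ' l).1 i j * feat σ m' θ' x l j) = 0 := by
      apply Finset.sum_eq_zero
      intro j hj
      rw [padW0j l i j (Nat.not_lt.mpr (Finset.mem_Ico.mp hj).1), zero_mul]
    rw [hz, add_zero, padB l i hi]
  refine ⟨θ', ⟨?_, ?_⟩, ?_⟩
  · -- weight partial derivatives vanish
    intro l hl i hi j hj
    by_cases hiv : i < m (l + 1)
    · by_cases hjv : j < m l
      · -- valid coordinate: reduces to narrow criticality
        have hfun : (fun t => risk σ m' K loss X Y (updW θ' l i j t))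
            = fun t => risk σ m K loss X Y (updW θ l i j t) := by
          funext t
          refine hre (updW θ l i j t) (updW θ' l i j t) ?_ ?_
          · intro l' hl' i' hi' j' hj'
            by_cases h : l' = l
            · subst h
              rw [updW_W_same, updW_W_same]
              by_cases h2 : i' = i ∧ j' = j
              · rw [if_pos h2, if_pos h2]
              · rw [if_neg h2, if_neg h2]
                exact padW l' i' j' hi' hj'
            · rw [updW_ne _ _ _ _ _ _ h, updW_ne _ _ _ _ _ _ h]
              exact padW l' i' j' hi' hj'
          · intro x l' hl' i' hi'
            have hz : (∑ j'' ∈ Finset.Ico (m l') (m' l'),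
                ((updW θ' l i j t) l').1 i' j'' *
                  feat σ m' (updW θ' l i j t) x l' j'') = 0 := by
              apply Finset.sum_eq_zero
              intro j'' hj''
              have hge : ¬ j'' < m l' := Nat.not_lt.mpr (Finset.mem_Ico.mp hj'').1
              by_cases h : l' = l
              · subst h
                rw [updW_W_same]
                have : ¬ (i' = i ∧ j'' = j) := by
                  rintro ⟨-, rfl⟩; exact hge hjv
                rw [if_neg this, padW0j l' i' j'' hge, zero_mul]
              · rw [updW_ne _ _ _ _ _ _ h, padW0j l' i' j'' hge, zero_mul]
            rw [hz, add_zero]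
            by_cases h : l' = l
            · subst h
              rw [updW_B_same, updW_B_same]
              exact padB l' i' hi'
            · rw [updW_ne _ _ _ _ _ _ h, updW_ne _ _ _ _ _ _ h]
              exact padB l' i' hi'
        rw [hfun, padW l i j hiv hjv]
        exact hcrit.1 l hl i hiv j hjv
      · -- weight from an extra neuron into a valid neuron
        have hl1 : 1 ≤ l := by
          rcases Nat.eq_zero_or_pos l with rfl | hpos
          · rw [h0] at hj; exact absurd hj hjv
          · exact hpos
        obtain ⟨p, rfl⟩ : ∃ p, l = p + 1 := ⟨l - 1, by omega⟩
        have hfun : (fun t => risk σ m' K loss X Y (updW θ' (p + 1) i j t))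
            = fun t => risk σ m K loss X Y
                (updB θ (p + 1) i ((θ (p + 1)).2 i + σ 0 * t)) := by
          funext t
          refine hre _ (updW θ' (p + 1) i j t) ?_ ?_
          · intro l' hl' i' hi' j' hj'
            rw [updB_W]
            by_cases h : l' = p + 1
            · subst h
              rw [updW_W_same]
              have : ¬ (i' = i ∧ j' = j) := by
                rintro ⟨-, rfl⟩; exact hjv hj'
              rw [if_neg this]
              exact padW (p + 1) i' j' hi' hj'
            · rw [updW_ne _ _ _ _ _ _ h]
              exact padW l' i' j' hi' hj'
          · intro x l' hl' i' hi'
            -- the extra neuron `j` has feature `σ 0`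
            have hp : p ≠ p + 1 := by omega
            have hfe : feat σ m' (updW θ' (p + 1) i j t) x (p + 1) j = σ 0 := by
              apply feat_extra
              · intro j'
                rw [updW_ne _ _ _ _ _ _ hp]
                exact padW0i p j j' hjv
              · rw [updW_ne _ _ _ _ _ _ hp]
                simp [hθ', pad, hjv]
            by_cases hcase : l' = p + 1 ∧ i' = i
            · obtain ⟨rfl, rfl⟩ := hcase
              have hsum : (∑ j'' ∈ Finset.Ico (m (p + 1)) (m' (p + 1)),
                  ((updW θ' (p + 1) i' j t) (p + 1)).1 i' j'' *
                    feat σ m' (updW θ' (p + 1) i' j t) x (p + 1) j'') = t * σ 0 := by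
                rw [Finset.sum_eq_single j]
                · rw [updW_W_same, if_pos ⟨rfl, rfl⟩, hfe]
                · intro j'' hj'' hne
                  have hge : ¬ j'' < m (p + 1) := Nat.not_lt.mpr (Finset.mem_Ico.mp hj'').1
                  rw [updW_W_same]
                  have : ¬ (i' = i' ∧ j'' = j) := by rintro ⟨-, rfl⟩; exact hne rfl
                  rw [if_neg this, padW0j (p + 1) i' j'' hge, zero_mul]
                · intro hj''
                  exact absurd (Finset.mem_Ico.mpr ⟨Nat.not_lt.mp hjv, hj⟩) hj''
              rw [hsum, updW_B_same, padB (p + 1) i' hi', updB_B_same, if_pos rfl]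
              ring
            · have hz : (∑ j'' ∈ Finset.Ico (m l') (m' l'),
                  ((updW θ' (p + 1) i j t) l').1 i' j'' *
                    feat σ m' (updW θ' (p + 1) i j t) x l' j'') = 0 := by
                apply Finset.sum_eq_zero
                intro j'' hj''
                have hge : ¬ j'' < m l' := Nat.not_lt.mpr (Finset.mem_Ico.mp hj'').1
                by_cases h : l' = p + 1
                · subst h
                  rw [updW_W_same]
                  have : ¬ (i' = i ∧ j'' = j) := by
                    rintro ⟨rfl, rfl⟩; exact hcase ⟨rfl, rfl⟩
                  rw [if_neg this, padW0j (p + 1) i' j'' hge, zero_mul]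
                · rw [updW_ne _ _ _ _ _ _ h, padW0j l' i' j'' hge, zero_mul]
              rw [hz, add_zero]
              by_cases h : l' = p + 1
              · subst h
                rw [updW_B_same, padB (p + 1) i' hi', updB_B_same]
                have : i' ≠ i := fun h' => hcase ⟨rfl, h'⟩
                rw [if_neg this]
              · rw [updW_ne _ _ _ _ _ _ h, updB_ne _ _ _ _ _ h, padB l' i' hi']
        rw [hfun, padW0j (p + 1) i j hjv]
        exact deriv_affine_zero _ _ _ (hcrit.2 (p + 1) hl i hiv)
    · -- incoming weight of an extra neuron: risk is constant
      have hfun : (fun t => risk σ m' K loss X Y (updW θ' l i j t))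
          = fun _ => risk σ m K loss X Y θ := by
        funext t
        refine hre θ (updW θ' l i j t) ?_ ?_
        · intro l' hl' i' hi' j' hj'
          by_cases h : l' = l
          · subst h
            rw [updW_W_same]
            have : ¬ (i' = i ∧ j' = j) := by rintro ⟨rfl, -⟩; exact hiv hi'
            rw [if_neg this]
            exact padW l' i' j' hi' hj'
          · rw [updW_ne _ _ _ _ _ _ h]
            exact padW l' i' j' hi' hj'
        · intro x l' hl' i' hi'
          have hz : (∑ j'' ∈ Finset.Ico (m l') (m' l'),
              ((updW θ' l i j t) l').1 i' j'' * feat σ m' (updW θ' l i j t) x l' j'') = 0 := by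
            apply Finset.sum_eq_zero
            intro j'' hj''
            have hge : ¬ j'' < m l' := Nat.not_lt.mpr (Finset.mem_Ico.mp hj'').1
            by_cases h : l' = l
            · subst h
              rw [updW_W_same]
              have : ¬ (i' = i ∧ j'' = j) := by rintro ⟨rfl, -⟩; exact hiv hi'
              rw [if_neg this, padW0j l' i' j'' hge, zero_mul]
            · rw [updW_ne _ _ _ _ _ _ h, padW0j l' i' j'' hge, zero_mul]
          rw [hz, add_zero]
          by_cases h : l' = l
          · subst h
            rw [updW_B_same]
            exact padB l' i' hi'
          · rw [updW_ne _ _ _ _ _ _ h]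
            exact padB l' i' hi'
      rw [hfun]
      exact deriv_const _ _
  · -- bias partial derivatives vanish
    intro l hl i hi
    by_cases hiv : i < m (l + 1)
    · have hfun : (fun t => risk σ m' K loss X Y (updB θ' l i t))
          = fun t => risk σ m K loss X Y (updB θ l i t) := by
        funext t
        refine hre (updB θ l i t) (updB θ' l i t) ?_ ?_
        · intro l' hl' i' hi' j' hj'
          rw [updB_W, updB_W]
          exact padW l' i' j' hi' hj'
        · intro x l' hl' i' hi'
          have hz : (∑ j'' ∈ Finset.Ico (m l') (m' l'),
              ((updB θ' l i t) l').1 i' j'' * feat σ m' (updB θ' l i t) x l' j'') = 0 := by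
            apply Finset.sum_eq_zero
            intro j'' hj''
            have hge : ¬ j'' < m l' := Nat.not_lt.mpr (Finset.mem_Ico.mp hj'').1
            rw [updB_W, padW0j l' i' j'' hge, zero_mul]
          rw [hz, add_zero]
          by_cases h : l' = l
          · subst h
            rw [updB_B_same, updB_B_same]
            by_cases h2 : i' = i
            · rw [if_pos h2, if_pos h2]
            · rw [if_neg h2, if_neg h2]
              exact padB l' i' hi'
          · rw [updB_ne _ _ _ _ _ h, updB_ne _ _ _ _ _ h]
            exact padB l' i' hi'
      rw [hfun, padB l i hiv]
      exact hcrit.2 l hl i hiv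
    · have hfun : (fun t => risk σ m' K loss X Y (updB θ' l i t))
          = fun _ => risk σ m K loss X Y θ := by
        funext t
        refine hre θ (updB θ' l i t) ?_ ?_
        · intro l' hl' i' hi' j' hj'
          rw [updB_W]
          exact padW l' i' j' hi' hj'
        · intro x l' hl' i' hi'
          have hz : (∑ j'' ∈ Finset.Ico (m l') (m' l'),
              ((updB θ' l i t) l').1 i' j'' * feat σ m' (updB θ' l i t) x l' j'') = 0 := by
            apply Finset.sum_eq_zero
            intro j'' hj''
            have hge : ¬ j'' < m l' := Nat.not_lt.mpr (Finset.mem_Ico.mp hj'').1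
            rw [updB_W, padW0j l' i' j'' hge, zero_mul]
          rw [hz, add_zero]
          by_cases h : l' = l
          · subst h
            rw [updB_B_same]
            have h2 : i' ≠ i := fun h' => hiv (h' ▸ hi')
            rw [if_neg h2]
            exact padB l' i' hi'
          · rw [updB_ne _ _ _ _ _ h]
            exact padB l' i' hi'
      rw [hfun]
      exact deriv_const _ _
  · -- output equality
    intro x i hi
    exact (main_eq σ m m' K hw θ θ' padH1 padH2 x K le_rfl).2 i hi

end EmbeddingPrinciple
end

section
/- Let T^α_I be a general compatible embedding from NN({m_l}_{l=0}^L) to a wider NN({m'_l}_{l=0}^L), with total index mapping I and coefficients α satisfying compatibility conditions I and II (with auxiliary reals β and effective biases b_*). Then for every parameter θ, writing θ' = T^α_I(θ), for every layer l ∈ [L], every index i ∈ [m'_l], and every input x: if I_l(i) ≠ 0 then (f^[l]_{θ'}(x))_i = (f^[l]_θ(x))_{I_l(i)}, and if I_l(i) = 0 then (f^[l]_{θ'}(x))_i = σ((b_*^[l])_i), a constant independent of x; in particular the output functions coincide, f_{θ'}(x) = f_θ(x) for all x. -/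
namespace EmbeddingPrinciple

/-- The general compatible embedding `T^α_I` determined by a pull-back index mapping `I`
(`none` plays the role of the paper's index `0`), coefficient matrices `A` (the paper's
`α^{[l]}`) and bias coefficients `Ab` (the paper's `α_b^{[l]}`), using the paper's
conventions `(W^{[l]})_{0j} = (W^{[l]})_{i0} = 1` and `(b^{[l]})_0 = 0`. -/
noncomputable def genEmb (I : ℕ → ℕ → Option ℕ) (A : ℕ → ℕ → ℕ → ℝ) (Ab : ℕ → ℕ → ℝ)
    (θ : NNParams) : NNParams := fun l =>
  ((fun i j =>
      A (l + 1) i j *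
        (match I (l + 1) i, I l j with
          | some a, some b => (θ l).1 a b
          | _, _ => 1)),
   (fun i => Ab (l + 1) i +
      (match I (l + 1) i with
        | some a => (θ l).2 a
        | none => 0)))

section Aux
open Finset

lemma genEmb_w_ss {I : ℕ → ℕ → Option ℕ} {A : ℕ → ℕ → ℕ → ℝ} {Ab : ℕ → ℕ → ℝ}
    {θ : NNParams} {l i j a b : ℕ} (h1 : I (l+1) i = some a) (h2 : I l j = some b) :
    ((genEmb I A Ab θ) l).1 i j = A (l+1) i j * (θ l).1 a b := by
  simp [genEmb, h1, h2]

lemma genEmb_w_sn {I : ℕ → ℕ → Option ℕ} {A : ℕ → ℕ → ℕ → ℝ} {Ab : ℕ → ℕ → ℝ}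
    {θ : NNParams} {l i j a : ℕ} (h1 : I (l+1) i = some a) (h2 : I l j = none) :
    ((genEmb I A Ab θ) l).1 i j = A (l+1) i j := by
  simp [genEmb, h1, h2]

lemma genEmb_w_n {I : ℕ → ℕ → Option ℕ} {A : ℕ → ℕ → ℕ → ℝ} {Ab : ℕ → ℕ → ℝ}
    {θ : NNParams} {l i j : ℕ} (h1 : I (l+1) i = none) :
    ((genEmb I A Ab θ) l).1 i j = A (l+1) i j := by
  rcases h : I l j with _ | b <;> simp [genEmb, h1, h]

lemma genEmb_b_s {I : ℕ → ℕ → Option ℕ} {A : ℕ → ℕ → ℕ → ℝ} {Ab : ℕ → ℕ → ℝ}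
    {θ : NNParams} {l i a : ℕ} (h1 : I (l+1) i = some a) :
    ((genEmb I A Ab θ) l).2 i = Ab (l+1) i + (θ l).2 a := by
  simp [genEmb, h1]

lemma genEmb_b_n {I : ℕ → ℕ → Option ℕ} {A : ℕ → ℕ → ℕ → ℝ} {Ab : ℕ → ℕ → ℝ}
    {θ : NNParams} {l i : ℕ} (h1 : I (l+1) i = none) :
    ((genEmb I A Ab θ) l).2 i = Ab (l+1) i := by
  simp [genEmb, h1]

lemma sum_split_fibers (ml m'l : ℕ) (Il : ℕ → Option ℕ)
    (hval : ∀ j, j < m'l → ∀ s, Il j = some s → s < ml) (F : ℕ → ℝ) :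
    ∑ j ∈ range m'l, F j =
      (∑ s ∈ range ml, ∑ j ∈ (range m'l).filter (fun j => Il j = some s), F j)
      + ∑ j ∈ (range m'l).filter (fun j => Il j = none), F j := by
  have hsplit := Finset.sum_filter_add_sum_filter_not (range m'l)
    (fun j => Il j = none) F
  rw [← hsplit, add_comm]
  congr 1
  have hmaps : ∀ j ∈ (range m'l).filter (fun j => ¬ Il j = none),
      (Il j).getD 0 ∈ range ml := by
    intro j hj
    simp only [mem_filter, mem_range] at hj
    rcases h : Il j with _ | s
    · exact absurd h hj.2
    · simpa [h] using hval j hj.1 s h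
  rw [← Finset.sum_fiberwise_of_maps_to hmaps F]
  refine Finset.sum_congr rfl fun s hs => ?_
  refine Finset.sum_congr ?_ fun _ _ => rfl
  ext j
  simp only [mem_filter, mem_range, filter_filter]
  constructor
  · rintro ⟨hj, hne, hg⟩
    rcases h : Il j with _ | t
    · exact absurd h hne
    · rw [h] at hg; simp at hg; exact ⟨hj, by rw [hg]⟩
  · rintro ⟨hj, h⟩
    exact ⟨hj, by simp [h], by simp [h]⟩

end Aux

/-- output preservation of the general compatible embedding: features of
effective neurons reproduce the narrow network's features, null neurons output the
constant `σ((b_*)_i)`, and the output functions coincide. -/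
theorem general_compatible_embedding_output_preserving
    (K : ℕ) (hK : 1 ≤ K) (m m' : ℕ → ℕ) (σ : ℝ → ℝ)
    (h0 : m' 0 = m 0) (hLtop : m' (K + 1) = m (K + 1)) (hge : ∀ l, m l ≤ m' l)
    -- total index mapping
    (I : ℕ → ℕ → Option ℕ)
    (hI0 : ∀ j, j < m' 0 → I 0 j = some j)
    (hIL : ∀ j, j < m' (K + 1) → I (K + 1) j = some j)
    (hIval : ∀ l, l ≤ K + 1 → ∀ j, j < m' l → ∀ s, I l j = some s → s < m l)
    (hItot : ∀ l, l ≤ K + 1 → ∀ s, s < m l → ∃ j, j < m' l ∧ I l j = some s)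
    (A : ℕ → ℕ → ℕ → ℝ) (Ab : ℕ → ℕ → ℝ) (β : ℕ → ℕ → ℝ) (bstar : ℕ → ℕ → ℝ)
    -- compatibility conditions I
    (hβtop : ∀ k, k < m' (K + 1) → β (K + 1) k = 1)
    (hfwd : ∀ l, 1 ≤ l → l ≤ K + 1 → ∀ i, i < m' l → ∀ s, s < m (l - 1) →
        (I l i ≠ none →
          ∑ j ∈ (Finset.range (m' (l - 1))).filter (fun j => I (l - 1) j = some s),
            A l i j = 1) ∧
        (I l i = none →
          ∑ j ∈ (Finset.range (m' (l - 1))).filter (fun j => I (l - 1) j = some s),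
            A l i j = 0))
    (hbwd : ∀ l, 1 ≤ l → l ≤ K + 1 → ∀ j, j < m' (l - 1) → ∀ k, k < m l →
        (∀ s, I (l - 1) j = some s →
          ∑ i ∈ (Finset.range (m' l)).filter (fun i => I l i = some k),
            β l i * A l i j = β (l - 1) j) ∧
        (I (l - 1) j = none →
          ∑ i ∈ (Finset.range (m' l)).filter (fun i => I l i = some k),
            β l i * A l i j = 0))
    -- compatibility conditions II
    (hAb0 : ∀ l, 1 ≤ l → l ≤ K + 1 → ∀ i, i < m' l → I l i ≠ none → Ab l i = 0)
    (hnull : ∀ l, 1 ≤ l → l ≤ K + 1 → ∀ i, i < m' l → I l i = none →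
        (∑ j ∈ (Finset.range (m' (l - 1))).filter (fun j => I (l - 1) j = none),
          A l i j * σ (bstar (l - 1) j)) + Ab l i = bstar l i)
    (heff : ∀ l, 1 ≤ l → l ≤ K + 1 → ∀ i, i < m' l → I l i ≠ none →
        (∑ j ∈ (Finset.range (m' (l - 1))).filter (fun j => I (l - 1) j = none),
          A l i j * σ (bstar (l - 1) j)) + Ab l i = 0)
    (θ : NNParams) (x : ℕ → ℝ) :
    (∀ l, 1 ≤ l → l ≤ K → ∀ i, i < m' l →
      (∀ s, I l i = some s →
          feat σ m' (genEmb I A Ab θ) x l i = feat σ m θ x l s) ∧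
      (I l i = none →
          feat σ m' (genEmb I A Ab θ) x l i = σ (bstar l i))) ∧
    ∀ i, i < m (K + 1) →
      nnOut σ m' K (genEmb I A Ab θ) x i = nnOut σ m K θ x i := by

  set θ' := genEmb I A Ab θ with hθ'
  -- the key pre-activation computation
  have key : ∀ l, l ≤ K →
      (∀ j, j < m' l →
        (∀ s, I l j = some s → feat σ m' θ' x l j = feat σ m θ x l s) ∧
        (I l j = none → feat σ m' θ' x l j = σ (bstar l j))) →
      ∀ i, i < m' (l + 1) →
      (∀ a, I (l+1) i = some a →
        (∑ j ∈ Finset.range (m' l), (θ' l).1 i j * feat σ m' θ' x l j) + (θ' l).2 i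
          = (∑ j ∈ Finset.range (m l), (θ l).1 a j * feat σ m θ x l j) + (θ l).2 a) ∧
      (I (l+1) i = none →
        (∑ j ∈ Finset.range (m' l), (θ' l).1 i j * feat σ m' θ' x l j) + (θ' l).2 i
          = bstar (l+1) i) := by
    intro l hl ih i hi
    have hval : ∀ j, j < m' l → ∀ s, I l j = some s → s < m l :=
      fun j hj s hs => hIval l (by omega) j hj s hs
    have hsplit := sum_split_fibers (m l) (m' l) (I l) hval
      (fun j => (θ' l).1 i j * feat σ m' θ' x l j)
    constructor
    · intro a ha
      have hfib : ∀ s ∈ Finset.range (m l),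
          ∑ j ∈ (Finset.range (m' l)).filter (fun j => I l j = some s),
            (θ' l).1 i j * feat σ m' θ' x l j
          = (θ l).1 a s * feat σ m θ x l s := by
        intro s hs
        rw [Finset.mem_range] at hs
        have : ∀ j ∈ (Finset.range (m' l)).filter (fun j => I l j = some s),
            (θ' l).1 i j * feat σ m' θ' x l j
            = A (l+1) i j * ((θ l).1 a s * feat σ m θ x l s) := by
          intro j hj
          rw [Finset.mem_filter, Finset.mem_range] at hj
          rw [genEmb_w_ss ha hj.2, (ih j hj.1).1 s hj.2]
          ring
        rw [Finset.sum_congr rfl this, ← Finset.sum_mul]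
        have h1 := (hfwd (l+1) (by omega) (by omega) i hi s
          (by simpa using hs)).1 (by simp [ha])
        simp only [Nat.add_sub_cancel] at h1
        rw [h1, one_mul]
      have hnul : ∑ j ∈ (Finset.range (m' l)).filter (fun j => I l j = none),
            (θ' l).1 i j * feat σ m' θ' x l j
          = ∑ j ∈ (Finset.range (m' l)).filter (fun j => I l j = none),
            A (l+1) i j * σ (bstar l j) := by
        refine Finset.sum_congr rfl fun j hj => ?_
        rw [Finset.mem_filter, Finset.mem_range] at hj
        rw [genEmb_w_sn ha hj.2, (ih j hj.1).2 hj.2]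
      have heq := heff (l+1) (by omega) (by omega) i hi (by simp [ha])
      simp only [Nat.add_sub_cancel] at heq
      rw [hsplit, Finset.sum_congr rfl hfib, hnul, genEmb_b_s ha]
      linarith [heq]
    · intro ha
      have hfib : ∀ s ∈ Finset.range (m l),
          ∑ j ∈ (Finset.range (m' l)).filter (fun j => I l j = some s),
            (θ' l).1 i j * feat σ m' θ' x l j = 0 := by
        intro s hs
        rw [Finset.mem_range] at hs
        have : ∀ j ∈ (Finset.range (m' l)).filter (fun j => I l j = some s),
            (θ' l).1 i j * feat σ m' θ' x l j
            = A (l+1) i j * feat σ m θ x l s := by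
          intro j hj
          rw [Finset.mem_filter, Finset.mem_range] at hj
          rw [genEmb_w_n ha, (ih j hj.1).1 s hj.2]
        rw [Finset.sum_congr rfl this, ← Finset.sum_mul]
        have h1 := (hfwd (l+1) (by omega) (by omega) i hi s
          (by simpa using hs)).2 ha
        simp only [Nat.add_sub_cancel] at h1
        rw [h1, zero_mul]
      have hnul : ∑ j ∈ (Finset.range (m' l)).filter (fun j => I l j = none),
            (θ' l).1 i j * feat σ m' θ' x l j
          = ∑ j ∈ (Finset.range (m' l)).filter (fun j => I l j = none),
            A (l+1) i j * σ (bstar l j) := by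
        refine Finset.sum_congr rfl fun j hj => ?_
        rw [Finset.mem_filter, Finset.mem_range] at hj
        rw [genEmb_w_n ha, (ih j hj.1).2 hj.2]
      have heq := hnull (l+1) (by omega) (by omega) i hi ha
      simp only [Nat.add_sub_cancel] at heq
      rw [hsplit, Finset.sum_congr rfl hfib, hnul, genEmb_b_n ha,
        Finset.sum_const_zero, zero_add]
      exact heq
  -- feature preservation by induction
  have main : ∀ l, l ≤ K → ∀ j, j < m' l →
      (∀ s, I l j = some s → feat σ m' θ' x l j = feat σ m θ x l s) ∧
      (I l j = none → feat σ m' θ' x l j = σ (bstar l j)) := by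
    intro l
    induction l with
    | zero =>
      intro _ j hj
      refine ⟨fun s hs => ?_, fun h => ?_⟩
      · rw [hI0 j hj] at hs
        obtain rfl : j = s := by simpa using hs
        rfl
      · rw [hI0 j hj] at h; exact absurd h (by simp)
    | succ l ih =>
      intro hl j hj
      have hkey := key l (by omega) (ih (by omega)) j hj
      refine ⟨fun s hs => ?_, fun h => ?_⟩
      · show σ _ = σ _
        rw [hkey.1 s hs]
      · show σ _ = σ _
        rw [hkey.2 h]
  refine ⟨fun l h1 h2 i hi => main l h2 i hi, fun i hi => ?_⟩
  have hi' : i < m' (K + 1) := by rw [hLtop]; exact hi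
  have hkey := key K le_rfl (main K le_rfl) i hi'
  exact hkey.1 i (hIL i hi')


end EmbeddingPrinciple
end

section
/- Let T^α_I be a general compatible embedding from NN({m_l}_{l=0}^L) to a wider NN({m'_l}_{l=0}^L), with total index mapping I and coefficients α satisfying compatibility conditions I and II. Then: (i) T^α_I is injective; (ii) T^α_I is affine, i.e., θ ↦ T^α_I(θ) − T^α_I(0) is linear; (iii) for any data S, loss ℓ, and activation σ (each differentiable), every critical point of the narrow network's empirical risk is mapped by T^α_I to a critical point of the wider network's empirical risk. -/
namespace EmbeddingPrinciple

/-! ### Auxiliary development -/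

lemma updW_self (θ : NNParams) (l i j : ℕ) : updW θ l i j ((θ l).1 i j) = θ := by
  funext l'
  unfold updW
  by_cases h : l' = l
  · subst h
    simp only [if_pos rfl]
    refine Prod.ext ?_ rfl
    funext i' j'
    by_cases h' : i' = i ∧ j' = j
    · obtain ⟨rfl, rfl⟩ := h'; simp
    · simp [h']
  · simp [h]

lemma updB_self (θ : NNParams) (l i : ℕ) : updB θ l i ((θ l).2 i) = θ := by
  funext l'
  unfold updB
  by_cases h : l' = l
  · subst h
    simp only [if_pos rfl]
    refine Prod.ext rfl ?_
    funext i'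
    by_cases h' : i' = i
    · subst h'; simp
    · simp [h']
  · simp [h]


/-- Forward-propagated derivative of the features, for a perturbation seeded at the
pre-activations of layer-index `l` in direction `u`. -/
noncomputable def dfeat (σ : ℝ → ℝ) (m : ℕ → ℕ) (θ : NNParams) (x : ℕ → ℝ)
    (u : ℕ → ℝ) (l : ℕ) : ℕ → ℕ → ℝ
  | 0 => 0
  | p + 1 => fun i =>
      gFeat σ m θ x p i *
        ((∑ j ∈ Finset.range (m p), (θ p).1 i j * dfeat σ m θ x u l p j) +
          (if p = l then u i else 0))

/-- Forward-propagated derivative of the pre-activations. -/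
noncomputable def dpre (σ : ℝ → ℝ) (m : ℕ → ℕ) (θ : NNParams) (x : ℕ → ℝ)
    (u : ℕ → ℝ) (l p i : ℕ) : ℝ :=
  (∑ j ∈ Finset.range (m p), (θ p).1 i j * dfeat σ m θ x u l p j) +
    (if p = l then u i else 0)

lemma dfeat_succ (σ : ℝ → ℝ) (m : ℕ → ℕ) (θ : NNParams) (x : ℕ → ℝ)
    (u : ℕ → ℝ) (l p i : ℕ) :
    dfeat σ m θ x u l (p + 1) i = gFeat σ m θ x p i * dpre σ m θ x u l p i := rfl

lemma dfeat_eq_zero (σ : ℝ → ℝ) (m : ℕ → ℕ) (θ : NNParams) (x : ℕ → ℝ)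
    (u : ℕ → ℝ) (l : ℕ) : ∀ p, p ≤ l → dfeat σ m θ x u l p = 0 := by
  intro p
  induction p with
  | zero => intro _; rfl
  | succ p ih =>
      intro hp
      funext i
      have hpl : p ≠ l := by omega
      rw [dfeat_succ, dpre]
      rw [ih (by omega)]
      simp [hpl]

lemma dpre_eq_zero (σ : ℝ → ℝ) (m : ℕ → ℕ) (θ : NNParams) (x : ℕ → ℝ)
    (u : ℕ → ℝ) (l p : ℕ) (hp : p < l) (i : ℕ) : dpre σ m θ x u l p i = 0 := by
  rw [dpre, dfeat_eq_zero σ m θ x u l p (by omega)]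
  simp [show p ≠ l by omega]

/-- Backward error vectors: `bvec Λ t` is the gradient of `∑ₖ Λ k ⬝ preact K k`
with respect to the pre-activations of layer-index `K - t`. -/
noncomputable def bvec (σ : ℝ → ℝ) (m : ℕ → ℕ) (K : ℕ) (θ : NNParams) (x : ℕ → ℝ)
    (Λ : ℕ → ℝ) : ℕ → ℕ → ℝ
  | 0 => Λ
  | t + 1 => fun j =>
      gFeat σ m θ x (K - (t + 1)) j *
        ∑ i ∈ Finset.range (m (K - t + 1)), (θ (K - t)).1 i j * bvec σ m K θ x Λ t i

/-- The key backpropagation identity. -/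
lemma backprop_sum (σ : ℝ → ℝ) (m : ℕ → ℕ) (K : ℕ) (θ : NNParams) (x : ℕ → ℝ)
    (Λ : ℕ → ℝ) :
    ∀ d l, l ≤ K → K - l = d → ∀ u : ℕ → ℝ,
      ∑ k ∈ Finset.range (m (K + 1)), Λ k * dpre σ m θ x u l K k =
        ∑ i ∈ Finset.range (m (l + 1)), bvec σ m K θ x Λ (K - l) i * u i := by
  intro d
  induction d with
  | zero =>
      intro l hl hd u
      have hlK : l = K := by omega
      subst hlK
      simp only [Nat.sub_self]
      refine Finset.sum_congr rfl fun k _ => ?_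
      rw [dpre, dfeat_eq_zero σ m θ x u l l le_rfl]
      simp [bvec]
  | succ d ih =>
      intro l hl hd u
      have hlK : l < K := by omega
      -- the shifted seed
      set u' : ℕ → ℝ := fun i =>
        ∑ j ∈ Finset.range (m (l + 1)), (θ (l + 1)).1 i j * (gFeat σ m θ x l j * u j) with hu'
      -- dfeat with seed (l, u) and (l+1, u') agree from layer l+2 on
      have hfeat : ∀ p, l + 2 ≤ p →
          dfeat σ m θ x u l p = dfeat σ m θ x u' (l + 1) p := by
        intro p
        induction p with
        | zero => omega
        | succ p ihp =>
            intro hp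
            funext i
            rw [dfeat_succ, dfeat_succ, dpre, dpre]
            by_cases hpl : p = l + 1
            · subst hpl
              rw [dfeat_eq_zero σ m θ x u' (l + 1) (l + 1) le_rfl]
              simp only [Pi.zero_apply, mul_zero, Finset.sum_const_zero, zero_add,
                if_pos rfl]
              rw [if_neg (by omega)]
              congr 1
              rw [add_zero, hu']
              refine Finset.sum_congr rfl fun j _ => ?_
              rw [dfeat_succ, dpre, dfeat_eq_zero σ m θ x u l l le_rfl]
              simp
            · have hpge : l + 2 ≤ p := by omega
              rw [ihp hpge, if_neg (by omega), if_neg hpl]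
      have hdpre : dpre σ m θ x u l K = dpre σ m θ x u' (l + 1) K := by
        funext k
        rw [dpre, dpre, if_neg (by omega)]
        by_cases hK2 : l + 2 ≤ K
        · rw [hfeat K hK2, if_neg (by omega)]
        · have hKl : K = l + 1 := by omega
          subst hKl
          rw [if_pos rfl, dfeat_eq_zero σ m θ x u' (l + 1) (l + 1) le_rfl]
          simp only [Pi.zero_apply, mul_zero, Finset.sum_const_zero, zero_add, add_zero]
          rw [hu']
          refine Finset.sum_congr rfl fun j _ => ?_
          rw [dfeat_succ, dpre, dfeat_eq_zero σ m θ x u l l le_rfl]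
          simp
      rw [hdpre, ih (l + 1) (by omega) (by omega) u']
      have ht : K - l = (K - (l + 1)) + 1 := by omega
      rw [ht]
      have hKt : K - (K - (l + 1)) = l + 1 := by omega
      have hbv : ∀ j, bvec σ m K θ x Λ (K - (l + 1) + 1) j =
          gFeat σ m θ x l j *
            ∑ i ∈ Finset.range (m (l + 2)), (θ (l + 1)).1 i j * bvec σ m K θ x Λ (K - (l + 1)) i := by
        intro j
        show gFeat σ m θ x (K - (K - (l+1) + 1)) j * _ = _
        rw [show K - (K - (l+1) + 1) = l by omega, show K - (K - (l+1)) = l + 1 by omega,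
          show l + 1 + 1 = l + 2 from rfl]
      trans (∑ i ∈ Finset.range (m (l + 2)), ∑ j ∈ Finset.range (m (l + 1)),
          bvec σ m K θ x Λ (K - (l + 1)) i *
            ((θ (l + 1)).1 i j * (gFeat σ m θ x l j * u j)))
      · refine Finset.sum_congr rfl fun i _ => ?_
        simp only [hu']
        exact Finset.mul_sum _ _ _
      · rw [Finset.sum_comm]
        refine Finset.sum_congr rfl fun j _ => ?_
        rw [hbv j, Finset.mul_sum, Finset.sum_mul]
        exact Finset.sum_congr rfl fun i _ => by ring


lemma hasDerivAt_updW (σ : ℝ → ℝ) (hσ : Differentiable ℝ σ) (m : ℕ → ℕ)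
    (θ : NNParams) (x : ℕ → ℝ) (l i j : ℕ) (hj : j < m l) :
    ∀ p q, HasDerivAt (fun t => preact σ m (updW θ l i j t) x p q)
      (dpre σ m θ x (fun i' => if i' = i then feat σ m θ x l j else 0) l p q)
      ((θ l).1 i j) := by
  set t₀ := (θ l).1 i j with ht₀
  set u : ℕ → ℝ := fun i' => if i' = i then feat σ m θ x l j else 0 with hu
  have h0 : updW θ l i j t₀ = θ := updW_self θ l i j
  have key : ∀ p, (∀ q, HasDerivAt (fun t => feat σ m (updW θ l i j t) x p q)
      (dfeat σ m θ x u l p q) t₀) →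
      ∀ q, HasDerivAt (fun t => preact σ m (updW θ l i j t) x p q)
        (dpre σ m θ x u l p q) t₀ := by
    intro p hf q
    by_cases hpl : p = l
    · subst hpl
      have hsum : HasDerivAt (fun t => ∑ j' ∈ Finset.range (m p),
          (if q = i ∧ j' = j then t else (θ p).1 q j') * feat σ m (updW θ p i j t) x p j')
          (∑ j' ∈ Finset.range (m p), ((if q = i ∧ j' = j then feat σ m θ x p j' else 0)
             + (θ p).1 q j' * dfeat σ m θ x u p p j')) t₀ := by
        apply HasDerivAt.fun_sum
        intro j' _
        have hf' := hf j'
        by_cases hc : q = i ∧ j' = j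
        · obtain ⟨rfl, rfl⟩ := hc
          have hw : HasDerivAt (fun t : ℝ => if q = q ∧ j' = j' then t else (θ p).1 q j')
              1 t₀ := by simp only [and_self, if_pos rfl]; exact hasDerivAt_id t₀
          have := hw.fun_mul hf'
          rw [h0] at this
          simpa [ht₀] using this
        · have hw : HasDerivAt (fun t : ℝ => if q = i ∧ j' = j then t else (θ p).1 q j')
              0 t₀ := by simp only [if_neg hc]; exact hasDerivAt_const t₀ _
          have := hw.fun_mul hf'
          rw [h0] at this
          simpa [hc] using this
      have hbig := hsum.add_const ((θ p).2 q)
      have hval : (∑ j' ∈ Finset.range (m p), ((if q = i ∧ j' = j then feat σ m θ x p j' else 0)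
             + (θ p).1 q j' * dfeat σ m θ x u p p j')) = dpre σ m θ x u p p q := by
        rw [Finset.sum_add_distrib, dpre, if_pos rfl, add_comm]
        congr 1
        by_cases hq : q = i
        · subst hq
          have hs : ∀ j', (if q = q ∧ j' = j then feat σ m θ x p j' else 0)
              = (if j' = j then feat σ m θ x p j' else 0) := fun j' => by simp
          rw [Finset.sum_congr rfl fun j' _ => hs j',
            Finset.sum_ite_eq' (Finset.range (m p)) j (fun j' => feat σ m θ x p j'),
            if_pos (Finset.mem_range.mpr hj), hu]
          simp
        · rw [hu]
          simp [hq]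
      rw [hval] at hbig
      convert hbig using 2
      case e'_4 => rfl
      case e'_5 => rfl
      simp [preact, updW]
    · have hsum : HasDerivAt (fun t => ∑ j' ∈ Finset.range (m p),
          (θ p).1 q j' * feat σ m (updW θ l i j t) x p j')
          (∑ j' ∈ Finset.range (m p), (θ p).1 q j' * dfeat σ m θ x u l p j') t₀ :=
        HasDerivAt.fun_sum fun j' _ => (hf j').const_mul _
      have hbig := hsum.add_const ((θ p).2 q)
      have : dpre σ m θ x u l p q =
          ∑ j' ∈ Finset.range (m p), (θ p).1 q j' * dfeat σ m θ x u l p j' := by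
        rw [dpre, if_neg hpl, add_zero]
      rw [this]
      convert hbig using 2
      case e'_4 => rfl
      case e'_5 => rfl
      simp only [preact, updW, if_neg hpl]
  have hfeat : ∀ p q, HasDerivAt (fun t => feat σ m (updW θ l i j t) x p q)
      (dfeat σ m θ x u l p q) t₀ := by
    intro p
    induction p with
    | zero => intro q; exact hasDerivAt_const t₀ (x q)
    | succ p ih =>
        intro q
        have hp := key p ih q
        have hσd : HasDerivAt σ (deriv σ (preact σ m θ x p q))
            (preact σ m (updW θ l i j t₀) x p q) := by
          rw [h0]; exact (hσ _).hasDerivAt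
        exact hσd.comp t₀ hp
  exact fun p => key p (hfeat p)

lemma hasDerivAt_updB (σ : ℝ → ℝ) (hσ : Differentiable ℝ σ) (m : ℕ → ℕ)
    (θ : NNParams) (x : ℕ → ℝ) (l i : ℕ) :
    ∀ p q, HasDerivAt (fun t => preact σ m (updB θ l i t) x p q)
      (dpre σ m θ x (fun i' => if i' = i then 1 else 0) l p q)
      ((θ l).2 i) := by
  set t₀ := (θ l).2 i with ht₀
  set u : ℕ → ℝ := fun i' => if i' = i then (1:ℝ) else 0 with hu
  have h0 : updB θ l i t₀ = θ := updB_self θ l i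
  have key : ∀ p, (∀ q, HasDerivAt (fun t => feat σ m (updB θ l i t) x p q)
      (dfeat σ m θ x u l p q) t₀) →
      ∀ q, HasDerivAt (fun t => preact σ m (updB θ l i t) x p q)
        (dpre σ m θ x u l p q) t₀ := by
    intro p hf q
    have hsum : HasDerivAt (fun t => ∑ j' ∈ Finset.range (m p),
        (θ p).1 q j' * feat σ m (updB θ l i t) x p j')
        (∑ j' ∈ Finset.range (m p), (θ p).1 q j' * dfeat σ m θ x u l p j') t₀ :=
      HasDerivAt.fun_sum fun j' _ => (hf j').const_mul _
    by_cases hpl : p = l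
    · subst hpl
      have hb : HasDerivAt (fun t : ℝ => if q = i then t else (θ p).2 q)
          (if q = i then 1 else 0) t₀ := by
        by_cases hq : q = i
        · simp only [if_pos hq]; exact hasDerivAt_id t₀
        · simp only [if_neg hq]; exact hasDerivAt_const t₀ _
      have hbig := hsum.add hb
      have hval : (∑ j' ∈ Finset.range (m p), (θ p).1 q j' * dfeat σ m θ x u p p j')
          + (if q = i then (1:ℝ) else 0) = dpre σ m θ x u p p q := by
        rw [dpre, if_pos rfl]
      rw [hval] at hbig
      convert hbig using 2
      case e'_4 => rfl
      case e'_5 => rfl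
      simp [preact, updB]
    · have hbig := hsum.add_const ((θ p).2 q)
      have : dpre σ m θ x u l p q =
          ∑ j' ∈ Finset.range (m p), (θ p).1 q j' * dfeat σ m θ x u l p j' := by
        rw [dpre, if_neg hpl, add_zero]
      rw [this]
      convert hbig using 2
      case e'_4 => rfl
      case e'_5 => rfl
      simp only [preact, updB, if_neg hpl]
  have hfeat : ∀ p q, HasDerivAt (fun t => feat σ m (updB θ l i t) x p q)
      (dfeat σ m θ x u l p q) t₀ := by
    intro p
    induction p with
    | zero => intro q; exact hasDerivAt_const t₀ (x q)
    | succ p ih =>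
        intro q
        have hp := key p ih q
        have hσd : HasDerivAt σ (deriv σ (preact σ m θ x p q))
            (preact σ m (updB θ l i t₀) x p q) := by
          rw [h0]; exact (hσ _).hasDerivAt
        exact hσd.comp t₀ hp
  exact fun p => key p (hfeat p)


/-- Gradient of the loss with respect to the network outputs. -/
noncomputable def lossGradD (d : ℕ)
    (loss : (ℕ → ℝ) → (ℕ → ℝ) → ℝ) (out y : ℕ → ℝ) : ℕ → ℝ :=
  fun k =>
    if h : k < d then
      (fderiv ℝ
        (fun u : Fin d → ℝ =>
          loss (fun i => if h : i < d then u ⟨i, h⟩ else 0) y)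
        (fun k' : Fin d => out k')) (Pi.single ⟨k, h⟩ 1)
    else 0

lemma lossGradD_congr (d : ℕ) (loss : (ℕ → ℝ) → (ℕ → ℝ) → ℝ) (y out1 out2 : ℕ → ℝ)
    (h : ∀ k, k < d → out1 k = out2 k) :
    lossGradD d loss out1 y = lossGradD d loss out2 y := by
  funext k
  unfold lossGradD
  by_cases hk : k < d
  · rw [dif_pos hk, dif_pos hk]
    have : (fun k' : Fin d => out1 k') = fun k' : Fin d => out2 k' :=
      funext fun k' => h k' k'.isLt
    rw [this]
  · rw [dif_neg hk, dif_neg hk]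

noncomputable abbrev lossGrad (σ : ℝ → ℝ) (m : ℕ → ℕ) (K : ℕ)
    (loss : (ℕ → ℝ) → (ℕ → ℝ) → ℝ) (θ : NNParams) (x y : ℕ → ℝ) : ℕ → ℝ :=
  lossGradD (m (K + 1)) loss (nnOut σ m K θ x) y

lemma hasDerivAt_risk_comp (σ : ℝ → ℝ) (m : ℕ → ℕ) (K : ℕ)
    (loss : (ℕ → ℝ) → (ℕ → ℝ) → ℝ) (hloss : LossDiff loss)
    {n : ℕ} (X Y : Fin n → ℕ → ℝ) (θ : NNParams)
    (θfam : ℝ → NNParams) (t₀ : ℝ) (hfam0 : θfam t₀ = θ)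
    (D : Fin n → ℕ → ℝ)
    (hD : ∀ (a : Fin n) (k : ℕ),
      HasDerivAt (fun t => preact σ m (θfam t) (X a) K k) (D a k) t₀) :
    HasDerivAt (fun t => risk σ m K loss X Y (θfam t))
      ((n : ℝ)⁻¹ * ∑ a : Fin n, ∑ k ∈ Finset.range (m (K + 1)),
        lossGrad σ m K loss θ (X a) (Y a) k * D a k) t₀ := by
  set d := m (K + 1) with hd
  have main : ∀ a : Fin n,
      HasDerivAt (fun t => loss (truncOut σ m K (θfam t) (X a)) (Y a))
        (∑ k ∈ Finset.range d, lossGrad σ m K loss θ (X a) (Y a) k * D a k) t₀ := by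
    intro a
    set g : (Fin d → ℝ) → ℝ :=
      fun u => loss (fun i => if h : i < d then u ⟨i, h⟩ else 0) (Y a) with hg
    have hgd : Differentiable ℝ g := hloss (Y a) d
    set ov : ℝ → (Fin d → ℝ) := fun t k => preact σ m (θfam t) (X a) K k with hov
    have hovd : HasDerivAt ov (fun k : Fin d => D a k) t₀ :=
      hasDerivAt_pi.mpr fun k => hD a k
    have hcomp : HasDerivAt (fun t => g (ov t))
        ((fderiv ℝ g (ov t₀)) (fun k : Fin d => D a k)) t₀ :=
      (hgd (ov t₀)).hasFDerivAt.comp_hasDerivAt t₀ hovd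
    have hfun : (fun t => loss (truncOut σ m K (θfam t) (X a)) (Y a)) =
        fun t => g (ov t) := by
      funext t
      have harg : truncOut σ m K (θfam t) (X a) =
          (fun i => if h : i < d then ov t ⟨i, h⟩ else 0) := by
        funext i
        by_cases h : i < d
        · simp [truncOut, nnOut, h, hov, ← hd]
        · simp [truncOut, h, ← hd]
      show loss (truncOut σ m K (θfam t) (X a)) (Y a) =
          loss (fun i => if h : i < d then ov t ⟨i, h⟩ else 0) (Y a)
      rw [harg]
    have hval : (fderiv ℝ g (ov t₀)) (fun k : Fin d => D a k) =
        ∑ k ∈ Finset.range d, lossGrad σ m K loss θ (X a) (Y a) k * D a k := by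
      have hdv : (fun k : Fin d => D a k) =
          ∑ k : Fin d, D a k • (Pi.single k (1 : ℝ) : Fin d → ℝ) := by
        funext k'
        simp [Finset.sum_apply, Pi.single_apply]
      rw [hdv, map_sum]
      rw [← Fin.sum_univ_eq_sum_range
        (fun k => lossGrad σ m K loss θ (X a) (Y a) k * D a k) d]
      have hbase : ov t₀ = fun k' : Fin d => nnOut σ m K θ (X a) k' := by
        funext k'; rw [hov]; simp [hfam0, nnOut]
      refine Finset.sum_congr rfl fun k _ => ?_
      rw [map_smul, smul_eq_mul, hbase]
      simp only [lossGradD, ← hd]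
      rw [dif_pos k.isLt, ← hg, Fin.eta]
      ring
    rw [hfun, ← hval]
    exact hcomp
  have hfin := (HasDerivAt.fun_sum (fun a (_ : a ∈ Finset.univ) => main a)).const_mul ((n : ℝ)⁻¹)
  exact hfin


lemma risk_deriv_W (σ : ℝ → ℝ) (hσ : Differentiable ℝ σ) (m : ℕ → ℕ) (K : ℕ)
    (loss : (ℕ → ℝ) → (ℕ → ℝ) → ℝ) (hloss : LossDiff loss)
    {n : ℕ} (X Y : Fin n → ℕ → ℝ) (θ : NNParams)
    (l i j : ℕ) (hl : l ≤ K) (hi : i < m (l + 1)) (hj : j < m l) :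
    deriv (fun t => risk σ m K loss X Y (updW θ l i j t)) ((θ l).1 i j) =
      (n : ℝ)⁻¹ * ∑ a : Fin n,
        bvec σ m K θ (X a) (lossGrad σ m K loss θ (X a) (Y a)) (K - l) i *
          feat σ m θ (X a) l j := by
  have hD := fun (a : Fin n) =>
    hasDerivAt_updW σ hσ m θ (X a) l i j hj K
  have hmain := hasDerivAt_risk_comp σ m K loss hloss X Y θ
    (updW θ l i j) ((θ l).1 i j) (updW_self θ l i j)
    (fun a k => dpre σ m θ (X a)
      (fun i' => if i' = i then feat σ m θ (X a) l j else 0) l K k)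
    (fun a k => hasDerivAt_updW σ hσ m θ (X a) l i j hj K k)
  rw [hmain.deriv]
  congr 1
  refine Finset.sum_congr rfl fun a _ => ?_
  rw [backprop_sum σ m K θ (X a) _ (K - l) l hl rfl]
  have : ∀ i' : ℕ,
      bvec σ m K θ (X a) (lossGrad σ m K loss θ (X a) (Y a)) (K - l) i' *
        (if i' = i then feat σ m θ (X a) l j else 0) =
      (if i' = i then
        bvec σ m K θ (X a) (lossGrad σ m K loss θ (X a) (Y a)) (K - l) i' *
          feat σ m θ (X a) l j else 0) := by
    intro i'; split <;> simp
  rw [Finset.sum_congr rfl fun i' _ => this i',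
    Finset.sum_ite_eq' (Finset.range (m (l + 1))) i, if_pos (Finset.mem_range.mpr hi)]

lemma risk_deriv_B (σ : ℝ → ℝ) (hσ : Differentiable ℝ σ) (m : ℕ → ℕ) (K : ℕ)
    (loss : (ℕ → ℝ) → (ℕ → ℝ) → ℝ) (hloss : LossDiff loss)
    {n : ℕ} (X Y : Fin n → ℕ → ℝ) (θ : NNParams)
    (l i : ℕ) (hl : l ≤ K) (hi : i < m (l + 1)) :
    deriv (fun t => risk σ m K loss X Y (updB θ l i t)) ((θ l).2 i) =
      (n : ℝ)⁻¹ * ∑ a : Fin n,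
        bvec σ m K θ (X a) (lossGrad σ m K loss θ (X a) (Y a)) (K - l) i := by
  have hmain := hasDerivAt_risk_comp σ m K loss hloss X Y θ
    (updB θ l i) ((θ l).2 i) (updB_self θ l i)
    (fun a k => dpre σ m θ (X a) (fun i' => if i' = i then 1 else 0) l K k)
    (fun a k => hasDerivAt_updB σ hσ m θ (X a) l i K k)
  rw [hmain.deriv]
  congr 1
  refine Finset.sum_congr rfl fun a _ => ?_
  rw [backprop_sum σ m K θ (X a) _ (K - l) l hl rfl]
  have : ∀ i' : ℕ,
      bvec σ m K θ (X a) (lossGrad σ m K loss θ (X a) (Y a)) (K - l) i' *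
        (if i' = i then (1:ℝ) else 0) =
      (if i' = i then
        bvec σ m K θ (X a) (lossGrad σ m K loss θ (X a) (Y a)) (K - l) i' else 0) := by
    intro i'; split <;> simp
  rw [Finset.sum_congr rfl fun i' _ => this i',
    Finset.sum_ite_eq' (Finset.range (m (l + 1))) i, if_pos (Finset.mem_range.mpr hi)]


lemma fiber_decomp (N M : ℕ) (I : ℕ → Option ℕ)
    (hval : ∀ j, j < N → ∀ s, I j = some s → s < M) (F : ℕ → ℝ) :
    ∑ j ∈ Finset.range N, F j =
      (∑ j ∈ (Finset.range N).filter (fun j => I j = none), F j) +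
      ∑ s ∈ Finset.range M,
        ∑ j ∈ (Finset.range N).filter (fun j => I j = some s), F j := by
  rw [← Finset.sum_filter_add_sum_filter_not (Finset.range N) (fun j => I j = none)]
  congr 1
  have hset : (Finset.range N).filter (fun j => ¬ I j = none) =
      (Finset.range M).biUnion
        (fun s => (Finset.range N).filter (fun j => I j = some s)) := by
    ext j
    simp only [Finset.mem_filter, Finset.mem_biUnion, Finset.mem_range]
    constructor
    · rintro ⟨hj, hne⟩
      obtain ⟨s, hs⟩ := Option.ne_none_iff_exists'.mp hne
      exact ⟨s, hval j hj s hs, hj, hs⟩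
    · rintro ⟨s, _, hj, hs⟩
      exact ⟨hj, by simp [hs]⟩
  rw [hset, Finset.sum_biUnion]
  intro s hs s' hs' hne
  refine Finset.disjoint_left.mpr ?_
  intro j hj hj'
  simp only [Finset.mem_filter] at hj hj'
  apply hne
  have := hj.2.symm.trans hj'.2
  exact Option.some_inj.mp this


section Corr

variable (K : ℕ) (m m' : ℕ → ℕ) (σ : ℝ → ℝ)
  (I : ℕ → ℕ → Option ℕ) (A : ℕ → ℕ → ℕ → ℝ) (Ab : ℕ → ℕ → ℝ)
  (bstar : ℕ → ℕ → ℝ) (θ : NNParams) (x : ℕ → ℝ)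

lemma preact_corr_step
    (hIval : ∀ l, l ≤ K + 1 → ∀ j, j < m' l → ∀ s, I l j = some s → s < m l)
    (hfwd : ∀ l, 1 ≤ l → l ≤ K + 1 → ∀ i, i < m' l → ∀ s, s < m (l - 1) →
        (I l i ≠ none →
          ∑ j ∈ (Finset.range (m' (l - 1))).filter (fun j => I (l - 1) j = some s),
            A l i j = 1) ∧
        (I l i = none →
          ∑ j ∈ (Finset.range (m' (l - 1))).filter (fun j => I (l - 1) j = some s),
            A l i j = 0))
    (hAb0 : ∀ l, 1 ≤ l → l ≤ K + 1 → ∀ i, i < m' l → I l i ≠ none → Ab l i = 0)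
    (hnull : ∀ l, 1 ≤ l → l ≤ K + 1 → ∀ i, i < m' l → I l i = none →
        (∑ j ∈ (Finset.range (m' (l - 1))).filter (fun j => I (l - 1) j = none),
          A l i j * σ (bstar (l - 1) j)) + Ab l i = bstar l i)
    (heff : ∀ l, 1 ≤ l → l ≤ K + 1 → ∀ i, i < m' l → I l i ≠ none →
        (∑ j ∈ (Finset.range (m' (l - 1))).filter (fun j => I (l - 1) j = none),
          A l i j * σ (bstar (l - 1) j)) + Ab l i = 0)
    (l : ℕ) (hl : l ≤ K)
    (hfeat : ∀ j, j < m' l →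
      (∀ s, I l j = some s →
        feat σ m' (genEmb I A Ab θ) x l j = feat σ m θ x l s) ∧
      (I l j = none → feat σ m' (genEmb I A Ab θ) x l j = σ (bstar l j))) :
    ∀ i, i < m' (l + 1) →
      (∀ s, I (l + 1) i = some s →
        preact σ m' (genEmb I A Ab θ) x l i = preact σ m θ x l s) ∧
      (I (l + 1) i = none →
        preact σ m' (genEmb I A Ab θ) x l i = bstar (l + 1) i) := by
  intro i hi
  set θ' := genEmb I A Ab θ with hθ'
  have hdec := fiber_decomp (m' l) (m l) (I l)
    (hIval l (by omega)) (fun j => (θ' l).1 i j * feat σ m' θ' x l j)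
  have hsucc1 : (1:ℕ) ≤ l + 1 := by omega
  have hsucc2 : l + 1 ≤ K + 1 := by omega
  have hsub : l + 1 - 1 = l := rfl
  constructor
  · intro s0 hs0
    have hne : I (l + 1) i ≠ none := by simp [hs0]
    -- null part vanishes
    have hAb : Ab (l + 1) i = 0 := hAb0 (l + 1) hsucc1 hsucc2 i hi hne
    have hnullsum :
        ∑ j ∈ (Finset.range (m' l)).filter (fun j => I l j = none),
          (θ' l).1 i j * feat σ m' θ' x l j = 0 := by
      have h1 : ∀ j ∈ (Finset.range (m' l)).filter (fun j => I l j = none),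
          (θ' l).1 i j * feat σ m' θ' x l j = A (l + 1) i j * σ (bstar l j) := by
        intro j hj
        simp only [Finset.mem_filter, Finset.mem_range] at hj
        rw [(hfeat j hj.1).2 hj.2, hθ']
        simp only [genEmb, hs0, hj.2]
        ring
      rw [Finset.sum_congr rfl h1]
      have := heff (l + 1) hsucc1 hsucc2 i hi hne
      rw [hsub] at this
      rw [hAb, add_zero] at this
      exact this
    -- fiber part
    have hfib : ∀ s ∈ Finset.range (m l),
        ∑ j ∈ (Finset.range (m' l)).filter (fun j => I l j = some s),
          (θ' l).1 i j * feat σ m' θ' x l j =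
        (θ l).1 s0 s * feat σ m θ x l s := by
      intro s hs
      rw [Finset.mem_range] at hs
      have h1 : ∀ j ∈ (Finset.range (m' l)).filter (fun j => I l j = some s),
          (θ' l).1 i j * feat σ m' θ' x l j =
            A (l + 1) i j * ((θ l).1 s0 s * feat σ m θ x l s) := by
        intro j hj
        simp only [Finset.mem_filter, Finset.mem_range] at hj
        rw [(hfeat j hj.1).1 s hj.2, hθ']
        simp only [genEmb, hs0, hj.2]
        ring
      rw [Finset.sum_congr rfl h1, ← Finset.sum_mul]
      have := ((hfwd (l + 1) hsucc1 hsucc2 i hi s (by rwa [hsub])).1 hne)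
      rw [hsub] at this
      rw [this, one_mul]
    have hbias : (θ' l).2 i = (θ l).2 s0 := by
      rw [hθ']; simp only [genEmb, hs0, hAb]; simp
    rw [preact, hdec, hnullsum, Finset.sum_congr rfl hfib, hbias, preact, zero_add]
  · intro hs0
    have hnullsum :
        ∑ j ∈ (Finset.range (m' l)).filter (fun j => I l j = none),
          (θ' l).1 i j * feat σ m' θ' x l j =
        ∑ j ∈ (Finset.range (m' l)).filter (fun j => I l j = none),
          A (l + 1) i j * σ (bstar l j) := by
      refine Finset.sum_congr rfl fun j hj => ?_
      simp only [Finset.mem_filter, Finset.mem_range] at hj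
      rw [(hfeat j hj.1).2 hj.2, hθ']
      simp only [genEmb, hs0, hj.2]
      ring
    have hfib : ∀ s ∈ Finset.range (m l),
        ∑ j ∈ (Finset.range (m' l)).filter (fun j => I l j = some s),
          (θ' l).1 i j * feat σ m' θ' x l j = 0 := by
      intro s hs
      rw [Finset.mem_range] at hs
      have h1 : ∀ j ∈ (Finset.range (m' l)).filter (fun j => I l j = some s),
          (θ' l).1 i j * feat σ m' θ' x l j =
            A (l + 1) i j * feat σ m θ x l s := by
        intro j hj
        simp only [Finset.mem_filter, Finset.mem_range] at hj
        rw [(hfeat j hj.1).1 s hj.2, hθ']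
        simp only [genEmb, hs0, hj.2]
        ring
      rw [Finset.sum_congr rfl h1, ← Finset.sum_mul]
      have := ((hfwd (l + 1) hsucc1 hsucc2 i hi s (by rwa [hsub])).2 hs0)
      rw [hsub] at this
      rw [this, zero_mul]
    have hbias : (θ' l).2 i = Ab (l + 1) i := by
      rw [hθ']; simp only [genEmb, hs0]; simp
    rw [preact, hdec, hnullsum, Finset.sum_congr rfl hfib, hbias,
      Finset.sum_const_zero, add_zero]
    have := hnull (l + 1) hsucc1 hsucc2 i hi hs0
    rw [hsub] at this
    exact this

lemma feat_corr
    (hI0 : ∀ j, j < m' 0 → I 0 j = some j)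
    (hIval : ∀ l, l ≤ K + 1 → ∀ j, j < m' l → ∀ s, I l j = some s → s < m l)
    (hfwd : ∀ l, 1 ≤ l → l ≤ K + 1 → ∀ i, i < m' l → ∀ s, s < m (l - 1) →
        (I l i ≠ none →
          ∑ j ∈ (Finset.range (m' (l - 1))).filter (fun j => I (l - 1) j = some s),
            A l i j = 1) ∧
        (I l i = none →
          ∑ j ∈ (Finset.range (m' (l - 1))).filter (fun j => I (l - 1) j = some s),
            A l i j = 0))
    (hAb0 : ∀ l, 1 ≤ l → l ≤ K + 1 → ∀ i, i < m' l → I l i ≠ none → Ab l i = 0)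
    (hnull : ∀ l, 1 ≤ l → l ≤ K + 1 → ∀ i, i < m' l → I l i = none →
        (∑ j ∈ (Finset.range (m' (l - 1))).filter (fun j => I (l - 1) j = none),
          A l i j * σ (bstar (l - 1) j)) + Ab l i = bstar l i)
    (heff : ∀ l, 1 ≤ l → l ≤ K + 1 → ∀ i, i < m' l → I l i ≠ none →
        (∑ j ∈ (Finset.range (m' (l - 1))).filter (fun j => I (l - 1) j = none),
          A l i j * σ (bstar (l - 1) j)) + Ab l i = 0) :
    ∀ l, l ≤ K + 1 → ∀ j, j < m' l →
      (∀ s, I l j = some s →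
        feat σ m' (genEmb I A Ab θ) x l j = feat σ m θ x l s) ∧
      (I l j = none → feat σ m' (genEmb I A Ab θ) x l j = σ (bstar l j)) := by
  intro l
  induction l with
  | zero =>
      intro _ j hj
      constructor
      · intro s hs
        have := hI0 j hj
        rw [this] at hs
        obtain rfl : j = s := Option.some_inj.mp hs
        rfl
      · intro hs
        rw [hI0 j hj] at hs
        exact absurd hs (by simp)
  | succ l ih =>
      intro hl j hj
      have hps := preact_corr_step K m m' σ I A Ab bstar θ x
        hIval hfwd hAb0 hnull heff l (by omega)
        (fun j' hj' => ih (by omega) j' hj') j hj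
      constructor
      · intro s hs
        have h1 : feat σ m' (genEmb I A Ab θ) x (l + 1) j =
            σ (preact σ m' (genEmb I A Ab θ) x l j) := rfl
        have h2 : feat σ m θ x (l + 1) s = σ (preact σ m θ x l s) := rfl
        rw [h1, h2, hps.1 s hs]
      · intro hs
        have h1 : feat σ m' (genEmb I A Ab θ) x (l + 1) j =
            σ (preact σ m' (genEmb I A Ab θ) x l j) := rfl
        rw [h1, hps.2 hs]


lemma bvec_corr (β : ℕ → ℕ → ℝ) (Λ : ℕ → ℝ)
    (hLtop : m' (K + 1) = m (K + 1))
    (hI0 : ∀ j, j < m' 0 → I 0 j = some j)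
    (hIL : ∀ j, j < m' (K + 1) → I (K + 1) j = some j)
    (hIval : ∀ l, l ≤ K + 1 → ∀ j, j < m' l → ∀ s, I l j = some s → s < m l)
    (hβtop : ∀ k, k < m' (K + 1) → β (K + 1) k = 1)
    (hfwd : ∀ l, 1 ≤ l → l ≤ K + 1 → ∀ i, i < m' l → ∀ s, s < m (l - 1) →
        (I l i ≠ none →
          ∑ j ∈ (Finset.range (m' (l - 1))).filter (fun j => I (l - 1) j = some s),
            A l i j = 1) ∧
        (I l i = none →
          ∑ j ∈ (Finset.range (m' (l - 1))).filter (fun j => I (l - 1) j = some s),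
            A l i j = 0))
    (hbwd : ∀ l, 1 ≤ l → l ≤ K + 1 → ∀ j, j < m' (l - 1) → ∀ k, k < m l →
        (∀ s, I (l - 1) j = some s →
          ∑ i ∈ (Finset.range (m' l)).filter (fun i => I l i = some k),
            β l i * A l i j = β (l - 1) j) ∧
        (I (l - 1) j = none →
          ∑ i ∈ (Finset.range (m' l)).filter (fun i => I l i = some k),
            β l i * A l i j = 0))
    (hAb0 : ∀ l, 1 ≤ l → l ≤ K + 1 → ∀ i, i < m' l → I l i ≠ none → Ab l i = 0)
    (hnull : ∀ l, 1 ≤ l → l ≤ K + 1 → ∀ i, i < m' l → I l i = none →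
        (∑ j ∈ (Finset.range (m' (l - 1))).filter (fun j => I (l - 1) j = none),
          A l i j * σ (bstar (l - 1) j)) + Ab l i = bstar l i)
    (heff : ∀ l, 1 ≤ l → l ≤ K + 1 → ∀ i, i < m' l → I l i ≠ none →
        (∑ j ∈ (Finset.range (m' (l - 1))).filter (fun j => I (l - 1) j = none),
          A l i j * σ (bstar (l - 1) j)) + Ab l i = 0) :
    ∀ t, t ≤ K → ∀ i, i < m' (K + 1 - t) →
      (∀ s, I (K + 1 - t) i = some s →
        bvec σ m' K (genEmb I A Ab θ) x Λ t i = β (K + 1 - t) i * bvec σ m K θ x Λ t s) ∧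
      (I (K + 1 - t) i = none → bvec σ m' K (genEmb I A Ab θ) x Λ t i = 0) := by
  intro t
  induction t with
  | zero =>
      intro _ i hi
      simp only [Nat.sub_zero] at hi ⊢
      constructor
      · intro s hs
        rw [hIL i hi] at hs
        obtain rfl : i = s := Option.some_inj.mp hs
        show Λ i = β (K + 1) i * Λ i
        rw [hβtop i hi, one_mul]
      · intro hs
        rw [hIL i hi] at hs
        exact absurd hs (by simp)
  | succ t ih =>
      intro ht j hj
      have htK : t + 1 ≤ K := ht
      have e1 : K + 1 - t = K - t + 1 := by omega
      have e2 : K + 1 - (t + 1) = K - t := by omega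
      have e3 : K - (t + 1) + 1 = K - t := by omega
      have e4 : 1 ≤ K - t := by omega
      rw [e2] at hj ⊢
      set θ' := genEmb I A Ab θ with hθ'
      -- IH in convenient form
      have ih' : ∀ i, i < m' (K - t + 1) →
          (∀ s, I (K - t + 1) i = some s →
            bvec σ m' K θ' x Λ t i = β (K - t + 1) i * bvec σ m K θ x Λ t s) ∧
          (I (K - t + 1) i = none → bvec σ m' K θ' x Λ t i = 0) := by
        intro i hi
        have := ih (by omega) i (by rwa [e1])
        rwa [e1] at this
      -- unfolding of wide bvec
      have hunf : bvec σ m' K θ' x Λ (t + 1) j =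
          gFeat σ m' θ' x (K - (t + 1)) j *
            ∑ i ∈ Finset.range (m' (K - t + 1)), (θ' (K - t)).1 i j * bvec σ m' K θ' x Λ t i := rfl
      -- fiber decomposition of the inner sum
      have hdec := fiber_decomp (m' (K - t + 1)) (m (K - t + 1)) (I (K - t + 1))
        (hIval (K - t + 1) (by omega))
        (fun i => (θ' (K - t)).1 i j * bvec σ m' K θ' x Λ t i)
      have hnullpart : ∑ i ∈ (Finset.range (m' (K - t + 1))).filter
            (fun i => I (K - t + 1) i = none),
          (θ' (K - t)).1 i j * bvec σ m' K θ' x Λ t i = 0 := by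
        refine Finset.sum_eq_zero fun i hi => ?_
        simp only [Finset.mem_filter, Finset.mem_range] at hi
        rw [(ih' i hi.1).2 hi.2, mul_zero]
      -- preact correspondence for gFeat
      have hstep := preact_corr_step K m m' σ I A Ab bstar θ x
        hIval hfwd hAb0 hnull heff (K - (t + 1)) (by omega)
        (fun j' hj' => feat_corr K m m' σ I A Ab bstar θ x
          hI0 hIval hfwd hAb0 hnull heff (K - (t + 1)) (by omega) j' hj') j
        (by rw [e3]; exact hj)
      rw [e3] at hstep
      constructor
      · intro b hb
        have hbm : b < m (K - t) := hIval (K - t) (by omega) j hj b hb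
        -- fiber part
        have hfib : ∀ a ∈ Finset.range (m (K - t + 1)),
            ∑ i ∈ (Finset.range (m' (K - t + 1))).filter
                (fun i => I (K - t + 1) i = some a),
              (θ' (K - t)).1 i j * bvec σ m' K θ' x Λ t i =
            β (K - t) j * ((θ (K - t)).1 a b * bvec σ m K θ x Λ t a) := by
          intro a ha
          rw [Finset.mem_range] at ha
          have h1 : ∀ i ∈ (Finset.range (m' (K - t + 1))).filter
              (fun i => I (K - t + 1) i = some a),
              (θ' (K - t)).1 i j * bvec σ m' K θ' x Λ t i =
              (β (K - t + 1) i * A (K - t + 1) i j) *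
                ((θ (K - t)).1 a b * bvec σ m K θ x Λ t a) := by
            intro i hi
            simp only [Finset.mem_filter, Finset.mem_range] at hi
            rw [(ih' i hi.1).1 a hi.2, hθ']
            simp only [genEmb, hi.2, hb]
            ring
          rw [Finset.sum_congr rfl h1, ← Finset.sum_mul]
          have hb2 := (hbwd (K - t + 1) (by omega) (by omega) j
            (by rw [show K - t + 1 - 1 = K - t from rfl]; exact hj) a ha).1 b
            (by rw [show K - t + 1 - 1 = K - t from rfl]; exact hb)
          rw [show K - t + 1 - 1 = K - t from rfl] at hb2
          rw [hb2]
        rw [hunf, hdec, hnullpart, zero_add, Finset.sum_congr rfl hfib,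
          ← Finset.mul_sum]
        have hgf : gFeat σ m' θ' x (K - (t + 1)) j = gFeat σ m θ x (K - (t + 1)) b := by
          unfold gFeat
          rw [hstep.1 b hb]
        rw [hgf]
        show _ = β (K - t) j * bvec σ m K θ x Λ (t + 1) b
        have hunf2 : bvec σ m K θ x Λ (t + 1) b =
            gFeat σ m θ x (K - (t + 1)) b *
              ∑ a ∈ Finset.range (m (K - t + 1)), (θ (K - t)).1 a b * bvec σ m K θ x Λ t a := rfl
        rw [hunf2]
        ring
      · intro hb
        have hfib : ∀ a ∈ Finset.range (m (K - t + 1)),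
            ∑ i ∈ (Finset.range (m' (K - t + 1))).filter
                (fun i => I (K - t + 1) i = some a),
              (θ' (K - t)).1 i j * bvec σ m' K θ' x Λ t i = 0 := by
          intro a ha
          rw [Finset.mem_range] at ha
          have h1 : ∀ i ∈ (Finset.range (m' (K - t + 1))).filter
              (fun i => I (K - t + 1) i = some a),
              (θ' (K - t)).1 i j * bvec σ m' K θ' x Λ t i =
              (β (K - t + 1) i * A (K - t + 1) i j) * bvec σ m K θ x Λ t a := by
            intro i hi
            simp only [Finset.mem_filter, Finset.mem_range] at hi
            rw [(ih' i hi.1).1 a hi.2, hθ']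
            simp only [genEmb, hi.2, hb]
            ring
          rw [Finset.sum_congr rfl h1, ← Finset.sum_mul]
          have hb2 := (hbwd (K - t + 1) (by omega) (by omega) j
            (by rw [show K - t + 1 - 1 = K - t from rfl]; exact hj) a ha).2
            (by rw [show K - t + 1 - 1 = K - t from rfl]; exact hb)
          rw [hb2, zero_mul]
        rw [hunf, hdec, hnullpart, zero_add, Finset.sum_congr rfl hfib,
          Finset.sum_const_zero, mul_zero]

end Corr


/-- the general compatible embedding is injective (between the parameter
spaces, i.e. on the valid coordinates), affine, and criticality preserving. -/
theorem general_compatible_embedding_is_critical_embedding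
    (K : ℕ) (hK : 1 ≤ K) (m m' : ℕ → ℕ) (σ : ℝ → ℝ) (hσ : Differentiable ℝ σ)
    (h0 : m' 0 = m 0) (hLtop : m' (K + 1) = m (K + 1)) (hge : ∀ l, m l ≤ m' l)
    -- total index mapping
    (I : ℕ → ℕ → Option ℕ)
    (hI0 : ∀ j, j < m' 0 → I 0 j = some j)
    (hIL : ∀ j, j < m' (K + 1) → I (K + 1) j = some j)
    (hIval : ∀ l, l ≤ K + 1 → ∀ j, j < m' l → ∀ s, I l j = some s → s < m l)
    (hItot : ∀ l, l ≤ K + 1 → ∀ s, s < m l → ∃ j, j < m' l ∧ I l j = some s)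
    (A : ℕ → ℕ → ℕ → ℝ) (Ab : ℕ → ℕ → ℝ) (β : ℕ → ℕ → ℝ) (bstar : ℕ → ℕ → ℝ)
    -- compatibility conditions I
    (hβtop : ∀ k, k < m' (K + 1) → β (K + 1) k = 1)
    (hfwd : ∀ l, 1 ≤ l → l ≤ K + 1 → ∀ i, i < m' l → ∀ s, s < m (l - 1) →
        (I l i ≠ none →
          ∑ j ∈ (Finset.range (m' (l - 1))).filter (fun j => I (l - 1) j = some s),
            A l i j = 1) ∧
        (I l i = none →
          ∑ j ∈ (Finset.range (m' (l - 1))).filter (fun j => I (l - 1) j = some s),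
            A l i j = 0))
    (hbwd : ∀ l, 1 ≤ l → l ≤ K + 1 → ∀ j, j < m' (l - 1) → ∀ k, k < m l →
        (∀ s, I (l - 1) j = some s →
          ∑ i ∈ (Finset.range (m' l)).filter (fun i => I l i = some k),
            β l i * A l i j = β (l - 1) j) ∧
        (I (l - 1) j = none →
          ∑ i ∈ (Finset.range (m' l)).filter (fun i => I l i = some k),
            β l i * A l i j = 0))
    -- compatibility conditions II
    (hAb0 : ∀ l, 1 ≤ l → l ≤ K + 1 → ∀ i, i < m' l → I l i ≠ none → Ab l i = 0)
    (hnull : ∀ l, 1 ≤ l → l ≤ K + 1 → ∀ i, i < m' l → I l i = none →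
        (∑ j ∈ (Finset.range (m' (l - 1))).filter (fun j => I (l - 1) j = none),
          A l i j * σ (bstar (l - 1) j)) + Ab l i = bstar l i)
    (heff : ∀ l, 1 ≤ l → l ≤ K + 1 → ∀ i, i < m' l → I l i ≠ none →
        (∑ j ∈ (Finset.range (m' (l - 1))).filter (fun j => I (l - 1) j = none),
          A l i j * σ (bstar (l - 1) j)) + Ab l i = 0) :
    -- (i) injectivity
    (∀ θ₁ θ₂ : NNParams,
        ParamEqOn m' K (genEmb I A Ab θ₁) (genEmb I A Ab θ₂) →
        ParamEqOn m K θ₁ θ₂) ∧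
    -- (ii) affinity
    IsLinearMap ℝ (fun θ : NNParams => genEmb I A Ab θ - genEmb I A Ab 0) ∧
    -- (iii) criticality preservation
    (∀ loss : (ℕ → ℝ) → (ℕ → ℝ) → ℝ, LossDiff loss →
      ∀ (n : ℕ) (X Y : Fin n → ℕ → ℝ) (θ : NNParams),
        IsCritical (risk σ m K loss X Y) m K θ →
        IsCritical (risk σ m' K loss X Y) m' K (genEmb I A Ab θ)) := by
  have hwjsome : ∀ (θ0 : NNParams) (l i j a b : ℕ), I (l + 1) i = some a → I l j = some b →
      (genEmb I A Ab θ0 l).1 i j = A (l + 1) i j * (θ0 l).1 a b := by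
    intro θ0 l i j a b hi hj
    simp only [genEmb, hi, hj]
  have hbsome : ∀ (θ0 : NNParams) (l i a : ℕ), I (l + 1) i = some a →
      (genEmb I A Ab θ0 l).2 i = Ab (l + 1) i + (θ0 l).2 a := by
    intro θ0 l i a hi
    simp only [genEmb, hi]
  refine ⟨?_, ?_, ?_⟩
  · -- (i) injectivity
    intro θ₁ θ₂ h l hl i hi
    obtain ⟨i', hi', hIi'⟩ := hItot (l + 1) (by omega) i hi
    have hfib : ∀ j, j < m l →
        ∑ j' ∈ (Finset.range (m' l)).filter (fun j' => I l j' = some j),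
          A (l + 1) i' j' = 1 := by
      intro j hj
      have := (hfwd (l + 1) (by omega) (by omega) i' hi' j
        (by rw [show l + 1 - 1 = l from rfl]; exact hj)).1 (by simp [hIi'])
      rwa [show l + 1 - 1 = l from rfl] at this
    constructor
    · intro j hj
      have key : ∀ θ0 : NNParams,
          ∑ j' ∈ (Finset.range (m' l)).filter (fun j' => I l j' = some j),
            (genEmb I A Ab θ0 l).1 i' j' = (θ0 l).1 i j := by
        intro θ0
        have h1 : ∀ j' ∈ (Finset.range (m' l)).filter (fun j' => I l j' = some j),
            (genEmb I A Ab θ0 l).1 i' j' = A (l + 1) i' j' * (θ0 l).1 i j := by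
          intro j' hj'
          simp only [Finset.mem_filter, Finset.mem_range] at hj'
          exact hwjsome θ0 l i' j' i j hIi' hj'.2
        rw [Finset.sum_congr rfl h1, ← Finset.sum_mul, hfib j hj, one_mul]
      rw [← key θ₁, ← key θ₂]
      refine Finset.sum_congr rfl fun j' hj' => ?_
      simp only [Finset.mem_filter, Finset.mem_range] at hj'
      exact ((h l hl i' hi').1 j' hj'.1)
    · have h2 := (h l hl i' hi').2
      rw [hbsome θ₁ l i' i hIi', hbsome θ₂ l i' i hIi'] at h2
      exact add_left_cancel h2
  · -- (ii) affinity
    constructor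
    · intro θ₁ θ₂
      funext l
      refine Prod.ext ?_ ?_
      · funext i j
        show (genEmb I A Ab (θ₁ + θ₂) l).1 i j - (genEmb I A Ab 0 l).1 i j =
          ((genEmb I A Ab θ₁ l).1 i j - (genEmb I A Ab 0 l).1 i j) +
          ((genEmb I A Ab θ₂ l).1 i j - (genEmb I A Ab 0 l).1 i j)
        simp only [genEmb]
        cases hIi : I (l + 1) i <;> cases hIj : I l j <;>
          simp [Pi.add_apply, Prod.fst_add] <;> ring
      · funext i
        show (genEmb I A Ab (θ₁ + θ₂) l).2 i - (genEmb I A Ab 0 l).2 i =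
          ((genEmb I A Ab θ₁ l).2 i - (genEmb I A Ab 0 l).2 i) +
          ((genEmb I A Ab θ₂ l).2 i - (genEmb I A Ab 0 l).2 i)
        simp only [genEmb]
        cases hIi : I (l + 1) i <;>
          simp [Pi.add_apply, Prod.snd_add] <;> ring
    · intro c θ0
      funext l
      refine Prod.ext ?_ ?_
      · funext i j
        show (genEmb I A Ab (c • θ0) l).1 i j - (genEmb I A Ab 0 l).1 i j =
          c • ((genEmb I A Ab θ0 l).1 i j - (genEmb I A Ab 0 l).1 i j)
        simp only [genEmb, smul_eq_mul]
        cases hIi : I (l + 1) i <;> cases hIj : I l j <;>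
          simp [Pi.smul_apply, Prod.smul_fst, smul_eq_mul] <;> ring
      · funext i
        show (genEmb I A Ab (c • θ0) l).2 i - (genEmb I A Ab 0 l).2 i =
          c • ((genEmb I A Ab θ0 l).2 i - (genEmb I A Ab 0 l).2 i)
        simp only [genEmb, smul_eq_mul]
        cases hIi : I (l + 1) i <;>
          simp [Pi.smul_apply, Prod.smul_snd, smul_eq_mul] <;> ring
  · -- (iii) criticality preservation
    intro loss hloss n X Y θ hcrit
    set θ' := genEmb I A Ab θ with hθ'
    -- output correspondence
    have hout : ∀ (x : ℕ → ℝ) (k : ℕ), k < m (K + 1) →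
        nnOut σ m' K θ' x k = nnOut σ m K θ x k := by
      intro x k hk
      have hk' : k < m' (K + 1) := by rw [hLtop]; exact hk
      have := (preact_corr_step K m m' σ I A Ab bstar θ x hIval hfwd hAb0 hnull heff
        K le_rfl
        (fun j' hj' => feat_corr K m m' σ I A Ab bstar θ x hI0 hIval hfwd hAb0 hnull
          heff K (by omega) j' hj') k hk').1 k (hIL k hk')
      exact this
    -- loss gradients agree
    have hΛ : ∀ a : Fin n,
        lossGradD (m' (K + 1)) loss (nnOut σ m' K θ' (X a)) (Y a) =
        lossGradD (m (K + 1)) loss (nnOut σ m K θ (X a)) (Y a) := by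
      intro a
      rw [hLtop]
      exact lossGradD_congr _ _ _ _ _ (fun k hk => hout (X a) k hk)
    -- narrow criticality in backprop form
    have hWn : ∀ l, l ≤ K → ∀ s, s < m (l + 1) → ∀ b, b < m l →
        (n : ℝ)⁻¹ * ∑ a : Fin n,
          bvec σ m K θ (X a) (lossGrad σ m K loss θ (X a) (Y a)) (K - l) s *
            feat σ m θ (X a) l b = 0 := by
      intro l hl s hs b hb
      rw [← risk_deriv_W σ hσ m K loss hloss X Y θ l s b hl hs hb]
      exact hcrit.1 l hl s hs b hb
    have hBn : ∀ l, l ≤ K → ∀ s, s < m (l + 1) →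
        (n : ℝ)⁻¹ * ∑ a : Fin n,
          bvec σ m K θ (X a) (lossGrad σ m K loss θ (X a) (Y a)) (K - l) s = 0 := by
      intro l hl s hs
      rw [← risk_deriv_B σ hσ m K loss hloss X Y θ l s hl hs]
      exact hcrit.2 l hl s hs
    -- wide bvec correspondence specialized
    have hbvcor : ∀ (a : Fin n) (l : ℕ), l ≤ K → ∀ i, i < m' (l + 1) →
        (∀ s, I (l + 1) i = some s →
          bvec σ m' K θ' (X a) (lossGrad σ m' K loss θ' (X a) (Y a)) (K - l) i =
            β (l + 1) i *
              bvec σ m K θ (X a) (lossGrad σ m K loss θ (X a) (Y a)) (K - l) s) ∧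
        (I (l + 1) i = none →
          bvec σ m' K θ' (X a) (lossGrad σ m' K loss θ' (X a) (Y a)) (K - l) i = 0) := by
      intro a l hl i hi
      have e : K + 1 - (K - l) = l + 1 := by omega
      have := bvec_corr K m m' σ I A Ab bstar θ (X a) β
        (lossGradD (m (K + 1)) loss (nnOut σ m K θ (X a)) (Y a))
        hLtop hI0 hIL hIval hβtop hfwd hbwd hAb0 hnull heff (K - l) (by omega) i
        (by rw [e]; exact hi)
      rw [e] at this
      have hgr : lossGrad σ m' K loss θ' (X a) (Y a) =
          lossGradD (m (K + 1)) loss (nnOut σ m K θ (X a)) (Y a) := hΛ a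
      rw [← hθ'] at this
      constructor
      · intro s hs
        rw [hgr]
        exact this.1 s hs
      · intro hs
        rw [hgr]
        exact this.2 hs
    constructor
    · -- weights
      intro l hl i hi j hj
      rw [risk_deriv_W σ hσ m' K loss hloss X Y θ' l i j hl hi hj]
      cases hIi : I (l + 1) i with
      | none =>
          have hz : ∀ a : Fin n,
              bvec σ m' K θ' (X a) (lossGrad σ m' K loss θ' (X a) (Y a)) (K - l) i *
                feat σ m' θ' (X a) l j = 0 := by
            intro a
            rw [(hbvcor a l hl i hi).2 hIi, zero_mul]
          rw [Finset.sum_congr rfl fun a _ => hz a, Finset.sum_const_zero, mul_zero]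
      | some s =>
          have hs : s < m (l + 1) := hIval (l + 1) (by omega) i hi s hIi
          cases hIj : I l j with
          | some b =>
              have hb : b < m l := hIval l (by omega) j hj b hIj
              have hfe : ∀ a : Fin n, feat σ m' θ' (X a) l j = feat σ m θ (X a) l b := by
                intro a
                exact (feat_corr K m m' σ I A Ab bstar θ (X a) hI0 hIval hfwd hAb0
                  hnull heff l (by omega) j hj).1 b hIj
              have hterm : ∀ a : Fin n,
                  bvec σ m' K θ' (X a) (lossGrad σ m' K loss θ' (X a) (Y a)) (K - l) i *
                    feat σ m' θ' (X a) l j =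
                  β (l + 1) i *
                    (bvec σ m K θ (X a) (lossGrad σ m K loss θ (X a) (Y a)) (K - l) s *
                      feat σ m θ (X a) l b) := by
                intro a
                rw [(hbvcor a l hl i hi).1 s hIi, hfe a]
                ring
              rw [Finset.sum_congr rfl fun a _ => hterm a, ← Finset.mul_sum]
              rw [show ((n : ℝ)⁻¹ * (β (l + 1) i * ∑ a : Fin n,
                  bvec σ m K θ (X a) (lossGrad σ m K loss θ (X a) (Y a)) (K - l) s *
                    feat σ m θ (X a) l b)) = β (l + 1) i * ((n : ℝ)⁻¹ * ∑ a : Fin n,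
                  bvec σ m K θ (X a) (lossGrad σ m K loss θ (X a) (Y a)) (K - l) s *
                    feat σ m θ (X a) l b) from by ring]
              rw [hWn l hl s hs b hb, mul_zero]
          | none =>
              have hfe : ∀ a : Fin n, feat σ m' θ' (X a) l j = σ (bstar l j) := by
                intro a
                exact (feat_corr K m m' σ I A Ab bstar θ (X a) hI0 hIval hfwd hAb0
                  hnull heff l (by omega) j hj).2 hIj
              have hterm : ∀ a : Fin n,
                  bvec σ m' K θ' (X a) (lossGrad σ m' K loss θ' (X a) (Y a)) (K - l) i *
                    feat σ m' θ' (X a) l j =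
                  (β (l + 1) i * σ (bstar l j)) *
                    bvec σ m K θ (X a) (lossGrad σ m K loss θ (X a) (Y a)) (K - l) s := by
                intro a
                rw [(hbvcor a l hl i hi).1 s hIi, hfe a]
                ring
              rw [Finset.sum_congr rfl fun a _ => hterm a, ← Finset.mul_sum]
              rw [show ((n : ℝ)⁻¹ * ((β (l + 1) i * σ (bstar l j)) * ∑ a : Fin n,
                  bvec σ m K θ (X a) (lossGrad σ m K loss θ (X a) (Y a)) (K - l) s)) =
                  (β (l + 1) i * σ (bstar l j)) * ((n : ℝ)⁻¹ * ∑ a : Fin n,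
                  bvec σ m K θ (X a) (lossGrad σ m K loss θ (X a) (Y a)) (K - l) s)
                  from by ring]
              rw [hBn l hl s hs, mul_zero]
    · -- biases
      intro l hl i hi
      rw [risk_deriv_B σ hσ m' K loss hloss X Y θ' l i hl hi]
      cases hIi : I (l + 1) i with
      | none =>
          have hz : ∀ a : Fin n,
              bvec σ m' K θ' (X a) (lossGrad σ m' K loss θ' (X a) (Y a)) (K - l) i = 0 :=
            fun a => (hbvcor a l hl i hi).2 hIi
          rw [Finset.sum_congr rfl fun a _ => hz a, Finset.sum_const_zero, mul_zero]
      | some s =>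
          have hs : s < m (l + 1) := hIval (l + 1) (by omega) i hi s hIi
          have hterm : ∀ a : Fin n,
              bvec σ m' K θ' (X a) (lossGrad σ m' K loss θ' (X a) (Y a)) (K - l) i =
              β (l + 1) i *
                bvec σ m K θ (X a) (lossGrad σ m K loss θ (X a) (Y a)) (K - l) s :=
            fun a => (hbvcor a l hl i hi).1 s hIi
          rw [Finset.sum_congr rfl fun a _ => hterm a, ← Finset.mul_sum]
          rw [show ((n : ℝ)⁻¹ * (β (l + 1) i * ∑ a : Fin n,
              bvec σ m K θ (X a) (lossGrad σ m K loss θ (X a) (Y a)) (K - l) s)) =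
              β (l + 1) i * ((n : ℝ)⁻¹ * ∑ a : Fin n,
              bvec σ m K θ (X a) (lossGrad σ m K loss θ (X a) (Y a)) (K - l) s)
              from by ring]
          rw [hBn l hl s hs, mul_zero]

end EmbeddingPrinciple
end
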